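/- arXiv:2002.00879 — 7 statements merged into one kernel-verified Lean document; each statement's English description precedes it below -/
import Mathlib

section
/- Let n ≥ 1. For every n×n complex Hermitian matrix A, γ(A) ≤ γ₀(A) ≤ 2·γ(A). -/
open Matrix ComplexOrder

/-- The ℓ¹ norm of a vector in ℂⁿ. -/
noncomputable def l1n {n : ℕ} (x : Fin n → ℂ) : ℝ := ∑ i, ‖x i‖

/-- The entrywise ℓ¹ norm ‖A‖₁,₁ of a matrix. -/
noncomputable def norm11 {n : ℕ} (A : Matrix (Fin n) (Fin n) ℂ) : ℝ :=
  ∑ i, ∑ j, ‖A i j‖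

/-- The Frobenius norm of a matrix. -/
noncomputable def frobNorm {n : ℕ} (A : Matrix (Fin n) (Fin n) ℂ) : ℝ :=
  Real.sqrt (∑ i, ∑ j, ‖A i j‖ ^ 2)

/-- γ₊(A): infimum of Σ ‖g_k‖₁² over finite decompositions A = Σ g_k g_k*. -/
noncomputable def gammaPlus {n : ℕ} (A : Matrix (Fin n) (Fin n) ℂ) : ℝ :=
  sInf {r : ℝ | ∃ (m : ℕ) (g : Fin m → Fin n → ℂ),
    A = ∑ k, vecMulVec (g k) (star (g k)) ∧ r = ∑ k, (l1n (g k)) ^ 2}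

/-- γ(A): infimum of Σ ‖g_k‖₁‖h_k‖₁ over finite decompositions A = Σ g_k h_k*. -/
noncomputable def gammaCross {n : ℕ} (A : Matrix (Fin n) (Fin n) ℂ) : ℝ :=
  sInf {r : ℝ | ∃ (m : ℕ) (g h : Fin m → Fin n → ℂ),
    A = ∑ k, vecMulVec (g k) (star (h k)) ∧ r = ∑ k, l1n (g k) * l1n (h k)}

/-- γ₀(A): infimum of γ₊(B) + γ₊(C) over decompositions A = B - C with B, C PSD. -/
noncomputable def gammaZero {n : ℕ} (A : Matrix (Fin n) (Fin n) ℂ) : ℝ :=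
  sInf {r : ℝ | ∃ B C : Matrix (Fin n) (Fin n) ℂ, B.PosSemidef ∧ C.PosSemidef ∧
    A = B - C ∧ r = gammaPlus B + gammaPlus C}

namespace Stmt3Aux

variable {n : ℕ}

lemma l1n_nonneg (x : Fin n → ℂ) : 0 ≤ l1n x :=
  Finset.sum_nonneg fun i _ => norm_nonneg _

lemma eq_zero_of_l1n (x : Fin n → ℂ) (h : l1n x = 0) : x = 0 := by
  funext i
  have := (Finset.sum_eq_zero_iff_of_nonneg
    (fun i _ => norm_nonneg (x i))).mp h i (Finset.mem_univ i)
  simpa using this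

lemma l1n_smul (c : ℂ) (x : Fin n → ℂ) : l1n (c • x) = ‖c‖ * l1n x := by
  simp [l1n, Finset.mul_sum]

lemma l1n_add_le (x y : Fin n → ℂ) : l1n (x + y) ≤ l1n x + l1n y := by
  rw [l1n, l1n, l1n, ← Finset.sum_add_distrib]
  exact Finset.sum_le_sum fun i _ => by simpa using norm_add_le (x i) (y i)

lemma l1n_neg (x : Fin n → ℂ) : l1n (-x) = l1n x := by simp [l1n]

lemma l1n_sub_le (x y : Fin n → ℂ) : l1n (x - y) ≤ l1n x + l1n y := by
  rw [sub_eq_add_neg]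
  have := l1n_add_le x (-y)
  rwa [l1n_neg] at this

lemma psd_vmv (v : Fin n → ℂ) : (vecMulVec v (star v)).PosSemidef := by
  rw [vecMulVec_eq Unit]
  have h := posSemidef_conjTranspose_mul_self (replicateRow Unit (star v))
  simpa [conjTranspose_replicateRow] using h

lemma psd_sum {m : ℕ} (g : Fin m → Fin n → ℂ) :
    (∑ k, vecMulVec (g k) (star (g k))).PosSemidef := by
  classical
  refine Finset.sum_induction _ _ (fun a b ha hb => ha.add hb) Matrix.PosSemidef.zero
    (fun k _ => psd_vmv (g k))

def plusSet (B : Matrix (Fin n) (Fin n) ℂ) : Set ℝ :=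
  {r : ℝ | ∃ (m : ℕ) (g : Fin m → Fin n → ℂ),
    B = ∑ k, vecMulVec (g k) (star (g k)) ∧ r = ∑ k, (l1n (g k)) ^ 2}

def crossSet (A : Matrix (Fin n) (Fin n) ℂ) : Set ℝ :=
  {r : ℝ | ∃ (m : ℕ) (g h : Fin m → Fin n → ℂ),
    A = ∑ k, vecMulVec (g k) (star (h k)) ∧ r = ∑ k, l1n (g k) * l1n (h k)}

def zeroSet (A : Matrix (Fin n) (Fin n) ℂ) : Set ℝ :=
  {r : ℝ | ∃ B C : Matrix (Fin n) (Fin n) ℂ, B.PosSemidef ∧ C.PosSemidef ∧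
    A = B - C ∧ r = gammaPlus B + gammaPlus C}

lemma gammaPlus_eq (B : Matrix (Fin n) (Fin n) ℂ) : gammaPlus B = sInf (plusSet B) := rfl
lemma gammaCross_eq (A : Matrix (Fin n) (Fin n) ℂ) : gammaCross A = sInf (crossSet A) := rfl
lemma gammaZero_eq (A : Matrix (Fin n) (Fin n) ℂ) : gammaZero A = sInf (zeroSet A) := rfl

lemma plusSet_nonneg (B : Matrix (Fin n) (Fin n) ℂ) : ∀ r ∈ plusSet B, (0:ℝ) ≤ r := by
  rintro r ⟨m, g, -, rfl⟩
  exact Finset.sum_nonneg fun k _ => sq_nonneg _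

lemma crossSet_nonneg (A : Matrix (Fin n) (Fin n) ℂ) : ∀ r ∈ crossSet A, (0:ℝ) ≤ r := by
  rintro r ⟨m, g, h, -, rfl⟩
  exact Finset.sum_nonneg fun k _ => mul_nonneg (l1n_nonneg _) (l1n_nonneg _)

lemma gammaPlus_nonneg (B : Matrix (Fin n) (Fin n) ℂ) : 0 ≤ gammaPlus B :=
  Real.sInf_nonneg (plusSet_nonneg B)

lemma zeroSet_nonneg (A : Matrix (Fin n) (Fin n) ℂ) : ∀ r ∈ zeroSet A, (0:ℝ) ≤ r := by
  rintro r ⟨B, C, -, -, -, rfl⟩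
  exact add_nonneg (gammaPlus_nonneg B) (gammaPlus_nonneg C)

lemma plusSet_bddBelow (B : Matrix (Fin n) (Fin n) ℂ) : BddBelow (plusSet B) :=
  ⟨0, plusSet_nonneg B⟩
lemma crossSet_bddBelow (A : Matrix (Fin n) (Fin n) ℂ) : BddBelow (crossSet A) :=
  ⟨0, crossSet_nonneg A⟩
lemma zeroSet_bddBelow (A : Matrix (Fin n) (Fin n) ℂ) : BddBelow (zeroSet A) :=
  ⟨0, zeroSet_nonneg A⟩

/-- Any PSD matrix admits a Gram decomposition, so its `plusSet` is nonempty. -/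
lemma plusSet_nonempty {B : Matrix (Fin n) (Fin n) ℂ} (hB : B.PosSemidef) :
    (plusSet B).Nonempty := by
  obtain ⟨M, hM⟩ : ∃ M : Matrix (Fin n) (Fin n) ℂ, B = Mᴴ * M := by
    open scoped MatrixOrder Matrix.Norms.L2Operator in
    obtain ⟨M, hM⟩ := CStarAlgebra.nonneg_iff_eq_star_mul_self.mp hB.nonneg
    exact ⟨M, hM⟩
  refine ⟨∑ k, (l1n (fun i => star (M k i))) ^ 2, n, fun k i => star (M k i), ?_, rfl⟩
  ext i j
  rw [hM]
  simp [Matrix.mul_apply, Matrix.sum_apply, vecMulVec_apply, mul_comm]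

/-- Any matrix has a trivial cross decomposition. -/
lemma crossSet_nonempty (A : Matrix (Fin n) (Fin n) ℂ) : (crossSet A).Nonempty := by
  classical
  refine ⟨_, n, (fun k i => if i = k then 1 else 0), (fun k j => star (A k j)), ?_, rfl⟩
  ext i j
  simp [Matrix.sum_apply, vecMulVec_apply]

section
variable {n m : ℕ} (g h : Fin m → Fin n → ℂ)

noncomputable def Gv : Fin m → Fin n → ℂ := fun k =>
  if l1n (g k) = 0 ∨ l1n (h k) = 0 then 0
  else ((Real.sqrt (l1n (h k) / l1n (g k)) : ℝ) : ℂ) • g k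

noncomputable def Hv : Fin m → Fin n → ℂ := fun k =>
  if l1n (g k) = 0 ∨ l1n (h k) = 0 then 0
  else ((Real.sqrt (l1n (g k) / l1n (h k)) : ℝ) : ℂ) • h k

lemma key1 (k : Fin m) :
    vecMulVec (Gv g h k) (star (Hv g h k)) = vecMulVec (g k) (star (h k)) := by
  by_cases hk : l1n (g k) = 0 ∨ l1n (h k) = 0
  · ext i j
    rcases hk with hk' | hk'
    · have := eq_zero_of_l1n _ hk'
      simp [Gv, Hv, hk', vecMulVec_apply, this]
    · have := eq_zero_of_l1n _ hk'
      simp [Gv, Hv, hk', vecMulVec_apply, this]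
  · push_neg at hk
    have hg0 : (0:ℝ) ≤ l1n (g k) := l1n_nonneg _
    have hh0 : (0:ℝ) ≤ l1n (h k) := l1n_nonneg _
    have hcd : Real.sqrt (l1n (h k) / l1n (g k)) * Real.sqrt (l1n (g k) / l1n (h k)) = 1 := by
      rw [← Real.sqrt_mul (div_nonneg hh0 hg0)]
      rw [div_mul_div_comm]
      rw [show l1n (h k) * l1n (g k) = l1n (g k) * l1n (h k) from mul_comm _ _]
      rw [div_self (mul_ne_zero hk.1 hk.2)]
      exact Real.sqrt_one
    ext i j
    simp only [Gv, Hv, if_neg (by tauto : ¬(l1n (g k) = 0 ∨ l1n (h k) = 0)),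
      vecMulVec_apply, Pi.smul_apply, smul_eq_mul, Pi.star_apply, star_mul',
      Complex.star_def, Complex.conj_ofReal]
    have : ((Real.sqrt (l1n (h k) / l1n (g k)) : ℝ) : ℂ) *
        ((Real.sqrt (l1n (g k) / l1n (h k)) : ℝ) : ℂ) = 1 := by
      rw [← Complex.ofReal_mul, hcd, Complex.ofReal_one]
    calc ((Real.sqrt (l1n (h k) / l1n (g k)) : ℝ) : ℂ) * g k i *
        (((Real.sqrt (l1n (g k) / l1n (h k)) : ℝ) : ℂ) * (starRingEnd ℂ) (h k j))
        = (((Real.sqrt (l1n (h k) / l1n (g k)) : ℝ) : ℂ) *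
          ((Real.sqrt (l1n (g k) / l1n (h k)) : ℝ) : ℂ)) * (g k i * (starRingEnd ℂ) (h k j)) := by ring
      _ = g k i * (starRingEnd ℂ) (h k j) := by rw [this, one_mul]

lemma key2 (k : Fin m) :
    l1n (Gv g h k) ≤ Real.sqrt (l1n (g k) * l1n (h k)) ∧
    l1n (Hv g h k) ≤ Real.sqrt (l1n (g k) * l1n (h k)) := by
  by_cases hk : l1n (g k) = 0 ∨ l1n (h k) = 0
  · constructor <;> · simp only [Gv, Hv, if_pos hk]
                      simpa [l1n] using Real.sqrt_nonneg _
  · push_neg at hk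
    have hg0 : (0:ℝ) ≤ l1n (g k) := l1n_nonneg _
    have hh0 : (0:ℝ) ≤ l1n (h k) := l1n_nonneg _
    constructor
    · rw [show Gv g h k = ((Real.sqrt (l1n (h k) / l1n (g k)) : ℝ) : ℂ) • g k from
        by simp [Gv, hk]]
      rw [l1n_smul, Complex.norm_real, Real.norm_eq_abs, abs_of_nonneg (Real.sqrt_nonneg _)]
      rw [show l1n (g k) * l1n (h k) = (l1n (h k) / l1n (g k)) * (l1n (g k))^2 by
        rw [div_mul_eq_mul_div, sq, ← mul_assoc, mul_div_assoc, div_self hk.1,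
          mul_one, mul_comm]]
      rw [Real.sqrt_mul (div_nonneg hh0 hg0), Real.sqrt_sq hg0]
    · rw [show Hv g h k = ((Real.sqrt (l1n (g k) / l1n (h k)) : ℝ) : ℂ) • h k from
        by simp [Hv, hk]]
      rw [l1n_smul, Complex.norm_real, Real.norm_eq_abs, abs_of_nonneg (Real.sqrt_nonneg _)]
      rw [show l1n (g k) * l1n (h k) = (l1n (g k) / l1n (h k)) * (l1n (h k))^2 by
        rw [div_mul_eq_mul_div, sq, ← mul_assoc, mul_div_assoc, div_self hk.2,
          mul_one]]
      rw [Real.sqrt_mul (div_nonneg hg0 hh0), Real.sqrt_sq hh0]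

noncomputable def Pv : Fin m → Fin n → ℂ := fun k => (((1:ℝ)/2 : ℝ) : ℂ) • (Gv g h k + Hv g h k)
noncomputable def Qv : Fin m → Fin n → ℂ := fun k => (((1:ℝ)/2 : ℝ) : ℂ) • (Gv g h k - Hv g h k)

lemma key3 (k : Fin m) :
    vecMulVec (Pv g h k) (star (Pv g h k)) - vecMulVec (Qv g h k) (star (Qv g h k)) =
      (((1:ℝ)/2 : ℝ) : ℂ) • (vecMulVec (Gv g h k) (star (Hv g h k)) +
        vecMulVec (Hv g h k) (star (Gv g h k))) := by
  ext i j
  simp only [Pv, Qv, Matrix.sub_apply, Matrix.add_apply, Matrix.smul_apply,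
    vecMulVec_apply, Pi.smul_apply, smul_eq_mul, Pi.add_apply, Pi.sub_apply,
    Pi.star_apply, Complex.star_def, _root_.map_mul, map_add, map_sub, Complex.conj_ofReal]
  push_cast
  ring

lemma key4 (u v : Fin n → ℂ) :
    (vecMulVec u (star v))ᴴ = vecMulVec v (star u) := by
  ext i j
  simp [conjTranspose_apply, vecMulVec_apply, mul_comm]

end


lemma hdec2_lemma {n m : ℕ} (A : Matrix (Fin n) (Fin n) ℂ) (g h : Fin m → Fin n → ℂ)
    (hdec : A = ∑ k, vecMulVec (g k) (star (h k))) :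
    A = ∑ k, vecMulVec (Gv g h k) (star (Hv g h k)) := by
  rw [hdec]
  exact (Finset.sum_congr rfl fun k _ => key1 g h k).symm

lemma zero_elem {n : ℕ} (A : Matrix (Fin n) (Fin n) ℂ) (hA : A.IsHermitian) :
    ∀ r ∈ zeroSet A, True := fun _ _ => trivial

lemma zero_elem' {n : ℕ} (A : Matrix (Fin n) (Fin n) ℂ) (hA : A.IsHermitian) :
    ∀ r ∈ crossSet A, ∃ e ∈ zeroSet A, e ≤ 2 * r := by
  rintro r ⟨m, g, h, hdec, rfl⟩
  set B := ∑ k, vecMulVec (Pv g h k) (star (Pv g h k)) with hBdef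
  set C := ∑ k, vecMulVec (Qv g h k) (star (Qv g h k)) with hCdef
  have hdec2 : A = ∑ k, vecMulVec (Gv g h k) (star (Hv g h k)) :=
    hdec2_lemma A g h hdec
  have hAT : Aᴴ = ∑ k, vecMulVec (Hv g h k) (star (Gv g h k)) := by
    rw [hdec2, Matrix.conjTranspose_sum]
    exact Finset.sum_congr rfl fun k _ => key4 _ _
  have hABC : A = B - C := by
    rw [hBdef, hCdef, ← Finset.sum_sub_distrib,
      Finset.sum_congr rfl fun k (_ : k ∈ Finset.univ) => key3 g h k,
      ← Finset.smul_sum, Finset.sum_add_distrib, ← hdec2, ← hAT, hA.eq,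
      ← two_smul ℂ A, smul_smul]
    rw [show (((1:ℝ)/2 : ℝ) : ℂ) * 2 = 1 by push_cast; ring, one_smul]
  have hPB : gammaPlus B ≤ ∑ k, l1n (Pv g h k)^2 :=
    csInf_le (plusSet_bddBelow B) ⟨m, Pv g h, hBdef, rfl⟩
  have hQC : gammaPlus C ≤ ∑ k, l1n (Qv g h k)^2 :=
    csInf_le (plusSet_bddBelow C) ⟨m, Qv g h, hCdef, rfl⟩
  refine ⟨gammaPlus B + gammaPlus C, ⟨B, C, psd_sum _, psd_sum _, hABC, rfl⟩, ?_⟩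
  have bound : ∀ k, l1n (Pv g h k)^2 + l1n (Qv g h k)^2 ≤ 2 * (l1n (g k) * l1n (h k)) := by
    intro k
    obtain ⟨h1, h2⟩ := key2 g h k
    set a := Real.sqrt (l1n (g k) * l1n (h k)) with hadef
    have ha0 : (0:ℝ) ≤ a := Real.sqrt_nonneg _
    have ha2 : a^2 = l1n (g k) * l1n (h k) :=
      Real.sq_sqrt (mul_nonneg (l1n_nonneg _) (l1n_nonneg _))
    have hP : l1n (Pv g h k) ≤ a := by
      have e1 : l1n (Pv g h k) = (1/2) * l1n (Gv g h k + Hv g h k) := by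
        show l1n ((((1:ℝ)/2 : ℝ) : ℂ) • (Gv g h k + Hv g h k)) = _
        rw [l1n_smul, Complex.norm_real, Real.norm_eq_abs, abs_of_nonneg (by norm_num : (0:ℝ) ≤ (1:ℝ)/2)]
      have e2 := l1n_add_le (Gv g h k) (Hv g h k)
      rw [e1]; linarith
    have hQ : l1n (Qv g h k) ≤ a := by
      have e1 : l1n (Qv g h k) = (1/2) * l1n (Gv g h k - Hv g h k) := by
        show l1n ((((1:ℝ)/2 : ℝ) : ℂ) • (Gv g h k - Hv g h k)) = _
        rw [l1n_smul, Complex.norm_real, Real.norm_eq_abs, abs_of_nonneg (by norm_num : (0:ℝ) ≤ (1:ℝ)/2)]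
      have e2 := l1n_sub_le (Gv g h k) (Hv g h k)
      rw [e1]; linarith
    have hP2 : l1n (Pv g h k)^2 ≤ a^2 := pow_le_pow_left₀ (l1n_nonneg _) hP 2
    have hQ2 : l1n (Qv g h k)^2 ≤ a^2 := pow_le_pow_left₀ (l1n_nonneg _) hQ 2
    linarith
  have hsum : (∑ k, l1n (Pv g h k)^2) + (∑ k, l1n (Qv g h k)^2) ≤
      2 * ∑ k, l1n (g k) * l1n (h k) := by
    rw [← Finset.sum_add_distrib, Finset.mul_sum]
    exact Finset.sum_le_sum fun k _ => bound k
  linarith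

lemma cross_le_zero {n : ℕ} (A : Matrix (Fin n) (Fin n) ℂ) :
    ∀ r ∈ zeroSet A, gammaCross A ≤ r := by
  rintro r ⟨B, C, hB, hC, hABC, rfl⟩
  refine le_of_forall_pos_le_add ?_
  intro ε hε
  obtain ⟨b, hbmem, hblt⟩ := Real.lt_sInf_add_pos (plusSet_nonempty hB) (half_pos hε)
  obtain ⟨c, hcmem, hclt⟩ := Real.lt_sInf_add_pos (plusSet_nonempty hC) (half_pos hε)
  obtain ⟨m1, g, hg, rfl⟩ := hbmem
  obtain ⟨m2, h, hh, rfl⟩ := hcmem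
  have hmem : ((∑ k, l1n (g k)^2) + ∑ k, l1n (h k)^2) ∈ crossSet A := by
    refine ⟨m1 + m2, Fin.append g h, Fin.append g (fun k => -(h k)), ?_, ?_⟩
    · rw [Fin.sum_univ_add]
      simp only [Fin.append_left, Fin.append_right]
      rw [hABC, hg, hh]
      ext i j
      simp [Matrix.sub_apply, Matrix.add_apply, Matrix.sum_apply, vecMulVec_apply,
        Pi.star_apply, Pi.neg_apply, star_neg, mul_neg, sub_eq_add_neg,
        Finset.sum_neg_distrib]
    · rw [Fin.sum_univ_add]
      simp [Fin.append_left, Fin.append_right, l1n_neg, sq]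
  have h1 : gammaCross A ≤ (∑ k, l1n (g k)^2) + ∑ k, l1n (h k)^2 :=
    csInf_le (crossSet_bddBelow A) hmem
  have e1 : gammaPlus B = sInf (plusSet B) := rfl
  have e2 : gammaPlus C = sInf (plusSet C) := rfl
  rw [e1, e2]
  linarith

end Stmt3Aux

theorem stmt3 (n : ℕ) (hn : 1 ≤ n) (A : Matrix (Fin n) (Fin n) ℂ) (hA : A.IsHermitian) :
    gammaCross A ≤ gammaZero A ∧ gammaZero A ≤ 2 * gammaCross A := by
  open Stmt3Aux in
  obtain ⟨r0, hr0⟩ := crossSet_nonempty A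
  obtain ⟨e0, he0mem, -⟩ := zero_elem' A hA r0 hr0
  have hZ : gammaZero A = sInf (zeroSet A) := rfl
  have hX : gammaCross A = sInf (crossSet A) := rfl
  constructor
  · rw [hZ]
    exact le_csInf ⟨e0, he0mem⟩ (cross_le_zero A)
  · have h2 : ∀ r ∈ crossSet A, gammaZero A ≤ 2 * r := by
      intro r hr
      obtain ⟨e, hem, hle⟩ := zero_elem' A hA r hr
      exact le_trans (csInf_le (zeroSet_bddBelow A) hem) hle
    have h3 : gammaZero A / 2 ≤ sInf (crossSet A) :=
      le_csInf ⟨r0, hr0⟩ fun r hr => by linarith [h2 r hr]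
    rw [hX]
    linarith
end

section
/- Let n ≥ 1. If A is an n×n complex Hermitian matrix with γ₀(A) = 0, then A = 0. Moreover, for all n×n complex Hermitian matrices A and B, |γ₀(A) − γ₀(B)| ≤ 2·‖A − B‖₁,₁. -/
open Matrix ComplexOrder

variable {n : ℕ}

def gpSet (A : Matrix (Fin n) (Fin n) ℂ) : Set ℝ :=
  {r : ℝ | ∃ (m : ℕ) (g : Fin m → Fin n → ℂ),
    A = ∑ k, vecMulVec (g k) (star (g k)) ∧ r = ∑ k, (l1n (g k)) ^ 2}

lemma gammaPlus_eq (A : Matrix (Fin n) (Fin n) ℂ) : gammaPlus A = sInf (gpSet A) := rfl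

lemma l1n_nonneg (x : Fin n → ℂ) : 0 ≤ l1n x :=
  Finset.sum_nonneg fun _ _ => norm_nonneg _

lemma gpSet_nonneg {A : Matrix (Fin n) (Fin n) ℂ} {r : ℝ} (hr : r ∈ gpSet A) : 0 ≤ r := by
  obtain ⟨m, g, -, rfl⟩ := hr
  exact Finset.sum_nonneg fun k _ => sq_nonneg _

lemma gpSet_bdd (A : Matrix (Fin n) (Fin n) ℂ) : BddBelow (gpSet A) :=
  ⟨0, fun r hr => gpSet_nonneg hr⟩

lemma gp_le {A : Matrix (Fin n) (Fin n) ℂ} {r : ℝ} (hr : r ∈ gpSet A) : gammaPlus A ≤ r :=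
  csInf_le (gpSet_bdd A) hr

lemma gp_nonneg (A : Matrix (Fin n) (Fin n) ℂ) : 0 ≤ gammaPlus A :=
  Real.sInf_nonneg fun _ hr => gpSet_nonneg hr

lemma gp_nonempty {A : Matrix (Fin n) (Fin n) ℂ} (hA : A.PosSemidef) : (gpSet A).Nonempty := by
  obtain ⟨m, v, hv⟩ := Matrix.posSemidef_iff_eq_sum_vecMulVec.mp hA
  exact ⟨_, m, v, hv, rfl⟩

lemma norm11_le_mem {A : Matrix (Fin n) (Fin n) ℂ} {r : ℝ} (hr : r ∈ gpSet A) :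
    norm11 A ≤ r := by
  obtain ⟨m, g, hA, rfl⟩ := hr
  have h1 : norm11 A ≤ ∑ i, ∑ j, ∑ k, ‖g k i‖ * ‖g k j‖ := by
    refine Finset.sum_le_sum fun i _ => Finset.sum_le_sum fun j _ => ?_
    rw [hA]
    simp only [Matrix.sum_apply, vecMulVec_apply, Pi.star_apply]
    refine le_trans (norm_sum_le _ _) (le_of_eq ?_)
    refine Finset.sum_congr rfl fun k _ => ?_
    simp [_root_.map_mul]
  refine h1.trans (le_of_eq ?_)
  calc ∑ i, ∑ j, ∑ k, ‖g k i‖ * ‖g k j‖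
      = ∑ i, ∑ k, ∑ j, ‖g k i‖ * ‖g k j‖ := by
        exact Finset.sum_congr rfl fun i _ => Finset.sum_comm
    _ = ∑ k, ∑ i, ∑ j, ‖g k i‖ * ‖g k j‖ := Finset.sum_comm
    _ = ∑ k, l1n (g k) ^ 2 := by
        refine Finset.sum_congr rfl fun k _ => ?_
        rw [sq, l1n, Finset.sum_mul_sum]

lemma norm11_le_gp {A : Matrix (Fin n) (Fin n) ℂ} (hA : A.PosSemidef) :
    norm11 A ≤ gammaPlus A :=
  le_csInf (gp_nonempty hA) fun _ hr => norm11_le_mem hr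

lemma gpSet_add {A B : Matrix (Fin n) (Fin n) ℂ} {r s : ℝ}
    (hr : r ∈ gpSet A) (hs : s ∈ gpSet B) : r + s ∈ gpSet (A + B) := by
  obtain ⟨m₁, g, hg, rfl⟩ := hr
  obtain ⟨m₂, h, hh, rfl⟩ := hs
  refine ⟨m₁ + m₂, Fin.append g h, ?_, ?_⟩
  · rw [Fin.sum_univ_add]
    simp only [Fin.append_left, Fin.append_right]
    rw [hg, hh]
  · rw [Fin.sum_univ_add]
    simp only [Fin.append_left, Fin.append_right]

lemma gp_add {A B : Matrix (Fin n) (Fin n) ℂ} (hA : A.PosSemidef) (hB : B.PosSemidef) :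
    gammaPlus (A + B) ≤ gammaPlus A + gammaPlus B := by
  rw [← sub_le_iff_le_add']
  refine le_csInf (gp_nonempty hB) fun s hs => ?_
  rw [sub_le_iff_le_add', ← sub_le_iff_le_add]
  refine le_csInf (gp_nonempty hA) fun r hr => ?_
  rw [sub_le_iff_le_add]
  exact gp_le (gpSet_add hr hs)

/-- vector used for the positive part of the elementary decomposition -/
noncomputable def pv (D : Matrix (Fin n) (Fin n) ℂ) (i j : Fin n) : Fin n → ℂ :=
  if i = j then (fun l => if l = i then ((Real.sqrt (max (D i i).re 0) : ℝ) : ℂ) else 0)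
  else fun l => if l = i then ((Real.sqrt (‖D i j‖) : ℝ) : ℂ) / 2
    else if l = j then (((Real.sqrt (‖D i j‖) : ℝ) : ℂ) / 2) *
      ((starRingEnd ℂ) (D i j) / ((‖D i j‖ : ℝ) : ℂ)) else 0

/-- vector used for the negative part -/
noncomputable def qv (D : Matrix (Fin n) (Fin n) ℂ) (i j : Fin n) : Fin n → ℂ :=
  if i = j then (fun l => if l = i then ((Real.sqrt (max (-(D i i).re) 0) : ℝ) : ℂ) else 0)
  else fun l => if l = i then ((Real.sqrt (‖D i j‖) : ℝ) : ℂ) / 2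
    else if l = j then -((((Real.sqrt (‖D i j‖) : ℝ) : ℂ) / 2) *
      ((starRingEnd ℂ) (D i j) / ((‖D i j‖ : ℝ) : ℂ))) else 0

lemma psd_vmv (g : Fin n → ℂ) : (vecMulVec g (star g)).PosSemidef := by
  rw [vecMulVec_eq (Fin 1), ← conjTranspose_replicateCol]
  exact posSemidef_self_mul_conjTranspose _

lemma psd_sum {ι : Type*} (s : Finset ι) (f : ι → Matrix (Fin n) (Fin n) ℂ)
    (h : ∀ i ∈ s, (f i).PosSemidef) : (∑ i ∈ s, f i).PosSemidef := by
  classical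
  induction s using Finset.induction_on with
  | empty => simpa using Matrix.PosSemidef.zero
  | insert _ _ hx ih =>
    rw [Finset.sum_insert hx]
    exact (h _ (Finset.mem_insert_self _ _)).add (ih fun i hi => h i (Finset.mem_insert_of_mem hi))

noncomputable def Pm (D : Matrix (Fin n) (Fin n) ℂ) : Matrix (Fin n) (Fin n) ℂ :=
  ∑ p : Fin n × Fin n, vecMulVec (pv D p.1 p.2) (star (pv D p.1 p.2))

noncomputable def Qm (D : Matrix (Fin n) (Fin n) ℂ) : Matrix (Fin n) (Fin n) ℂ :=
  ∑ p : Fin n × Fin n, vecMulVec (qv D p.1 p.2) (star (qv D p.1 p.2))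

lemma Pm_psd (D : Matrix (Fin n) (Fin n) ℂ) : (Pm D).PosSemidef :=
  psd_sum _ _ fun _ _ => psd_vmv _

lemma Qm_psd (D : Matrix (Fin n) (Fin n) ℂ) : (Qm D).PosSemidef :=
  psd_sum _ _ fun _ _ => psd_vmv _

lemma sqrt_mul_self_c (s : ℝ) (hs : 0 ≤ s) :
    ((Real.sqrt s : ℝ) : ℂ) * ((Real.sqrt s : ℝ) : ℂ) = (s : ℂ) := by
  rw [← Complex.ofReal_mul, Real.mul_self_sqrt hs]


lemma pv_support {D : Matrix (Fin n) (Fin n) ℂ} {i j l : Fin n} (h1 : ¬ l = i) (h2 : ¬ l = j) :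
    pv D i j l = 0 := by
  by_cases hij : i = j <;> simp [pv, hij, h1, h2]

lemma qv_support {D : Matrix (Fin n) (Fin n) ℂ} {i j l : Fin n} (h1 : ¬ l = i) (h2 : ¬ l = j) :
    qv D i j l = 0 := by
  by_cases hij : i = j <;> simp [qv, hij, h1, h2]

lemma pv_at_i {D : Matrix (Fin n) (Fin n) ℂ} {i j : Fin n} (hij : ¬ i = j) :
    pv D i j i = ((Real.sqrt (‖D i j‖) : ℝ) : ℂ) / 2 := by
  simp [pv, hij]

lemma qv_at_i {D : Matrix (Fin n) (Fin n) ℂ} {i j : Fin n} (hij : ¬ i = j) :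
    qv D i j i = ((Real.sqrt (‖D i j‖) : ℝ) : ℂ) / 2 := by
  simp [qv, hij]

lemma pv_at_j {D : Matrix (Fin n) (Fin n) ℂ} {i j : Fin n} (hij : ¬ i = j) :
    pv D i j j = (((Real.sqrt (‖D i j‖) : ℝ) : ℂ) / 2) *
      ((starRingEnd ℂ) (D i j) / ((‖D i j‖ : ℝ) : ℂ)) := by
  have hji : ¬ j = i := fun h => hij h.symm
  simp [pv, hij, hji]

lemma qv_at_j {D : Matrix (Fin n) (Fin n) ℂ} {i j : Fin n} (hij : ¬ i = j) :
    qv D i j j = -((((Real.sqrt (‖D i j‖) : ℝ) : ℂ) / 2) *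
      ((starRingEnd ℂ) (D i j) / ((‖D i j‖ : ℝ) : ℂ))) := by
  have hji : ¬ j = i := fun h => hij h.symm
  simp [qv, hij, hji]

lemma pv_diag (D : Matrix (Fin n) (Fin n) ℂ) (i : Fin n) :
    pv D i i i = ((Real.sqrt (max (D i i).re 0) : ℝ) : ℂ) := by simp [pv]

lemma qv_diag (D : Matrix (Fin n) (Fin n) ℂ) (i : Fin n) :
    qv D i i i = ((Real.sqrt (max (-(D i i).re) 0) : ℝ) : ℂ) := by simp [qv]

lemma cancel1 {D : Matrix (Fin n) (Fin n) ℂ} {i j : Fin n} (hij : ¬ i = j) (a : Fin n) :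
    pv D i j a * star (pv D i j a) = qv D i j a * star (qv D i j a) := by
  by_cases hai : a = i
  · subst hai; rw [pv_at_i hij, qv_at_i hij]
  · by_cases haj : a = j
    · subst haj; rw [pv_at_j hij, qv_at_j hij]; simp
    · rw [pv_support hai haj, qv_support hai haj]

lemma pq_entry {D : Matrix (Fin n) (Fin n) ℂ} (hD : D.IsHermitian) (a b : Fin n) :
    (Pm D) a b - (Qm D) a b = D a b := by
  rw [Pm, Qm, Matrix.sum_apply, Matrix.sum_apply, ← Finset.sum_sub_distrib]
  have habs : ∀ x y : Fin n, ‖D x y‖ = ‖D y x‖ := by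
    intro x y; rw [← hD.apply y x, Complex.star_def, Complex.norm_conj]
  by_cases hab : a = b
  · subst hab
    rw [Finset.sum_eq_single (a, a)]
    · simp only [vecMulVec_apply, Pi.star_apply, pv_diag, qv_diag]
      simp only [Complex.star_def, Complex.conj_ofReal]
      rw [sqrt_mul_self_c _ (le_max_right _ _), sqrt_mul_self_c _ (le_max_right _ _),
        ← Complex.ofReal_sub]
      have hmax : max (D a a).re 0 - max (-(D a a).re) 0 = (D a a).re := by
        rcases le_total 0 (D a a).re with h0 | h0
        · rw [max_eq_left h0, max_eq_right (neg_nonpos.mpr h0), sub_zero]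
        · rw [max_eq_right h0, max_eq_left (neg_nonneg.mpr h0), zero_sub, neg_neg]
      rw [hmax]
      exact Complex.conj_eq_iff_re.mp (by simpa using hD.apply a a)
    · intro p _ hp
      obtain ⟨i, j⟩ := p
      simp only [vecMulVec_apply, Pi.star_apply]
      by_cases hij : i = j
      · subst hij
        have hai : ¬ a = i := fun e => hp (by rw [e])
        rw [pv_support hai hai, qv_support hai hai]
        simp
      · rw [cancel1 hij a, sub_self]
    · intro habs'; exact absurd (Finset.mem_univ _) habs'
  · have hsub : ({(a, b), (b, a)} : Finset (Fin n × Fin n)) ⊆ Finset.univ := Finset.subset_univ _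
    rw [← Finset.sum_subset hsub ?zero]
    case zero =>
      intro p _ hp
      obtain ⟨i, j⟩ := p
      simp only [Finset.mem_insert, Finset.mem_singleton, Prod.mk.injEq, not_or] at hp
      obtain ⟨hp1, hp2⟩ := hp
      simp only [vecMulVec_apply, Pi.star_apply]
      by_cases hai : a = i
      · by_cases hbj : b = j
        · exact absurd ⟨hai.symm, hbj.symm⟩ hp1
        · have hbi : ¬ b = i := fun e => hab (hai.trans e.symm)
          rw [pv_support hbi hbj, qv_support hbi hbj]
          simp
      · by_cases haj : a = j
        · by_cases hbi : b = i
          · exact absurd ⟨hbi.symm, haj.symm⟩ hp2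
          · have hbj : ¬ b = j := fun e => hab (haj.trans e.symm)
            rw [pv_support hbi hbj, qv_support hbi hbj]
            simp
        · rw [pv_support hai haj, qv_support hai haj]
          simp
    rw [Finset.sum_pair (by simp [hab, Ne.symm hab])]
    simp only [vecMulVec_apply, Pi.star_apply]
    by_cases hz : D a b = 0
    · have hz' : D b a = 0 := by rw [← hD.apply b a, hz, Complex.star_def, map_zero]
      simp [pv, qv, hab, Ne.symm hab, hz, hz']
    · have hs0 : ‖D a b‖ ≠ 0 := by simpa using hz
      have hba : D b a = (starRingEnd ℂ) (D a b) := by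
        rw [← hD.apply b a, Complex.star_def]
      rw [pv_at_i hab, pv_at_j hab, qv_at_i hab, qv_at_j hab,
        pv_at_i (fun e => hab e.symm), pv_at_j (fun e => hab e.symm),
        qv_at_i (fun e => hab e.symm), qv_at_j (fun e => hab e.symm)]
      rw [habs b a, hba]
      have ht : ((Real.sqrt (‖D a b‖) : ℝ) : ℂ) *
          ((Real.sqrt (‖D a b‖) : ℝ) : ℂ) = ((‖D a b‖ : ℝ) : ℂ) :=
        sqrt_mul_self_c _ (norm_nonneg _)
      have hsC : ((‖D a b‖ : ℝ) : ℂ) ≠ 0 := by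
        simpa using hs0
      set t : ℂ := ((Real.sqrt (‖D a b‖) : ℝ) : ℂ) with hts
      set sC : ℂ := ((‖D a b‖ : ℝ) : ℂ) with hsc
      have hct : (starRingEnd ℂ) t = t := by rw [hts, Complex.conj_ofReal]
      have hcs : (starRingEnd ℂ) sC = sC := by rw [hsc, Complex.conj_ofReal]
      simp only [_root_.map_mul, map_div₀, map_neg, Complex.conj_conj, hct, hcs, map_ofNat]
      field_simp
      ring_nf
      simp only [Complex.star_def, _root_.map_mul, map_div₀, map_neg, map_inv₀, Complex.conj_conj,
        hct, hcs, map_one, map_ofNat]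
      linear_combination (t * t * D a b) * mul_inv_cancel₀ hsC + (2 * D a b) * ht

lemma l1n_ite (i : Fin n) (c : ℂ) : l1n (fun l => if l = i then c else 0) = ‖c‖ := by
  rw [l1n, Finset.sum_eq_single i (fun l _ hl => by simp [hl])
    (fun h => absurd (Finset.mem_univ _) h)]
  simp

lemma l1n_two {i j : Fin n} (hij : ¬ i = j) (c d : ℂ) :
    l1n (fun l => if l = i then c else if l = j then d else 0) =
      ‖c‖ + ‖d‖ := by
  have hji : ¬ j = i := fun h => hij h.symm
  rw [l1n, ← Finset.sum_subset (Finset.subset_univ {i, j})]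
  · rw [Finset.sum_pair hij]
    simp [hij, hji]
  · intro l _ hl
    simp only [Finset.mem_insert, Finset.mem_singleton, not_or] at hl
    simp [hl.1, hl.2]

lemma cost_bound (D : Matrix (Fin n) (Fin n) ℂ) (i j : Fin n) :
    l1n (pv D i j) ^ 2 + l1n (qv D i j) ^ 2 ≤ 2 * ‖D i j‖ := by
  by_cases hij : i = j
  · subst hij
    have h1 : pv D i i = fun l => if l = i then ((Real.sqrt (max (D i i).re 0) : ℝ) : ℂ) else 0 := by
      simp [pv]
    have h2 : qv D i i = fun l =>
        if l = i then ((Real.sqrt (max (-(D i i).re) 0) : ℝ) : ℂ) else 0 := by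
      simp [qv]
    rw [h1, h2, l1n_ite, l1n_ite, Complex.norm_real, Real.norm_eq_abs, Complex.norm_real, Real.norm_eq_abs,
      abs_of_nonneg (Real.sqrt_nonneg _), abs_of_nonneg (Real.sqrt_nonneg _),
      Real.sq_sqrt (le_max_right _ _), Real.sq_sqrt (le_max_right _ _)]
    have hm : max (D i i).re 0 + max (-(D i i).re) 0 = |(D i i).re| := by
      rcases le_total 0 (D i i).re with h0 | h0
      · rw [max_eq_left h0, max_eq_right (neg_nonpos.mpr h0), add_zero, abs_of_nonneg h0]
      · rw [max_eq_right h0, max_eq_left (neg_nonneg.mpr h0), zero_add, abs_of_nonpos h0]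
    rw [hm]
    have := Complex.abs_re_le_norm (D i i)
    have := norm_nonneg (D i i)
    linarith
  · have h1 : pv D i j = fun l => if l = i then ((Real.sqrt (‖D i j‖) : ℝ) : ℂ) / 2
        else if l = j then (((Real.sqrt (‖D i j‖) : ℝ) : ℂ) / 2) *
          ((starRingEnd ℂ) (D i j) / ((‖D i j‖ : ℝ) : ℂ)) else 0 := by
      simp [pv, hij]
    have h2 : qv D i j = fun l => if l = i then ((Real.sqrt (‖D i j‖) : ℝ) : ℂ) / 2
        else if l = j then -((((Real.sqrt (‖D i j‖) : ℝ) : ℂ) / 2) *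
          ((starRingEnd ℂ) (D i j) / ((‖D i j‖ : ℝ) : ℂ))) else 0 := by
      simp [qv, hij]
    rw [h1, h2, l1n_two hij, l1n_two hij]
    by_cases hz : D i j = 0
    · simp [hz]
    · have hs : ‖D i j‖ ≠ 0 := by simpa using hz
      have e1 : ‖((Real.sqrt (‖D i j‖) : ℝ) : ℂ) / 2‖ =
          Real.sqrt (‖D i j‖) / 2 := by
        rw [norm_div, Complex.norm_real, Real.norm_eq_abs, Complex.norm_two,
          abs_of_nonneg (Real.sqrt_nonneg _)]
      have e2 : ‖(((Real.sqrt (‖D i j‖) : ℝ) : ℂ) / 2) *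
          ((starRingEnd ℂ) (D i j) / ((‖D i j‖ : ℝ) : ℂ))‖ =
          Real.sqrt (‖D i j‖) / 2 := by
        rw [norm_mul, e1, norm_div, Complex.norm_conj, Complex.norm_real, Real.norm_eq_abs,
          abs_of_nonneg (norm_nonneg _), div_self hs, mul_one]
      rw [e2, norm_neg, e2, e1]
      have hhalf : Real.sqrt (‖D i j‖) / 2 + Real.sqrt (‖D i j‖) / 2 =
          Real.sqrt (‖D i j‖) := by ring
      rw [hhalf, Real.sq_sqrt (norm_nonneg _)]
      linarith [norm_nonneg (D i j)]

lemma norm11_prod (D : Matrix (Fin n) (Fin n) ℂ) :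
    norm11 D = ∑ p : Fin n × Fin n, ‖D p.1 p.2‖ := by
  rw [norm11, Fintype.sum_prod_type]

lemma gp_Pm_le (D : Matrix (Fin n) (Fin n) ℂ) :
    gammaPlus (Pm D) ≤ ∑ p : Fin n × Fin n, l1n (pv D p.1 p.2) ^ 2 := by
  refine gp_le ⟨n * n, fun k => pv D (finProdFinEquiv.symm k).1 (finProdFinEquiv.symm k).2,
    ?_, ?_⟩
  · exact (Equiv.sum_comp finProdFinEquiv.symm
      (fun p : Fin n × Fin n => vecMulVec (pv D p.1 p.2) (star (pv D p.1 p.2)))).symm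
  · exact (Equiv.sum_comp finProdFinEquiv.symm
      (fun p : Fin n × Fin n => l1n (pv D p.1 p.2) ^ 2)).symm

lemma gp_Qm_le (D : Matrix (Fin n) (Fin n) ℂ) :
    gammaPlus (Qm D) ≤ ∑ p : Fin n × Fin n, l1n (qv D p.1 p.2) ^ 2 := by
  refine gp_le ⟨n * n, fun k => qv D (finProdFinEquiv.symm k).1 (finProdFinEquiv.symm k).2,
    ?_, ?_⟩
  · exact (Equiv.sum_comp finProdFinEquiv.symm
      (fun p : Fin n × Fin n => vecMulVec (qv D p.1 p.2) (star (qv D p.1 p.2)))).symm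
  · exact (Equiv.sum_comp finProdFinEquiv.symm
      (fun p : Fin n × Fin n => l1n (qv D p.1 p.2) ^ 2)).symm

lemma decomp {D : Matrix (Fin n) (Fin n) ℂ} (hD : D.IsHermitian) :
    ∃ P Q : Matrix (Fin n) (Fin n) ℂ, P.PosSemidef ∧ Q.PosSemidef ∧ D = P - Q ∧
      gammaPlus P + gammaPlus Q ≤ 2 * norm11 D := by
  refine ⟨Pm D, Qm D, Pm_psd D, Qm_psd D, ?_, ?_⟩
  · ext a b
    rw [Matrix.sub_apply]
    exact (pq_entry hD a b).symm
  · calc gammaPlus (Pm D) + gammaPlus (Qm D)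
        ≤ (∑ p : Fin n × Fin n, l1n (pv D p.1 p.2) ^ 2) +
          (∑ p : Fin n × Fin n, l1n (qv D p.1 p.2) ^ 2) :=
          add_le_add (gp_Pm_le D) (gp_Qm_le D)
      _ = ∑ p : Fin n × Fin n, (l1n (pv D p.1 p.2) ^ 2 + l1n (qv D p.1 p.2) ^ 2) := by
          rw [Finset.sum_add_distrib]
      _ ≤ ∑ p : Fin n × Fin n, 2 * ‖D p.1 p.2‖ :=
          Finset.sum_le_sum fun p _ => cost_bound D p.1 p.2
      _ = 2 * norm11 D := by rw [norm11_prod, Finset.mul_sum]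

def gzSet (A : Matrix (Fin n) (Fin n) ℂ) : Set ℝ :=
  {r : ℝ | ∃ B C : Matrix (Fin n) (Fin n) ℂ, B.PosSemidef ∧ C.PosSemidef ∧
    A = B - C ∧ r = gammaPlus B + gammaPlus C}

lemma gammaZero_eq (A : Matrix (Fin n) (Fin n) ℂ) : gammaZero A = sInf (gzSet A) := rfl

lemma gzSet_nonneg {A : Matrix (Fin n) (Fin n) ℂ} {r : ℝ} (hr : r ∈ gzSet A) : 0 ≤ r := by
  obtain ⟨B, C, -, -, -, rfl⟩ := hr
  exact add_nonneg (gp_nonneg B) (gp_nonneg C)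

lemma gzSet_bdd (A : Matrix (Fin n) (Fin n) ℂ) : BddBelow (gzSet A) :=
  ⟨0, fun _ hr => gzSet_nonneg hr⟩

lemma gz_le {A : Matrix (Fin n) (Fin n) ℂ} {r : ℝ} (hr : r ∈ gzSet A) : gammaZero A ≤ r :=
  csInf_le (gzSet_bdd A) hr

lemma gz_nonempty {A : Matrix (Fin n) (Fin n) ℂ} (hA : A.IsHermitian) :
    (gzSet A).Nonempty := by
  obtain ⟨P, Q, hP, hQ, hPQ, -⟩ := decomp hA
  exact ⟨gammaPlus P + gammaPlus Q, P, Q, hP, hQ, hPQ, rfl⟩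

lemma norm11_sub_le (B C : Matrix (Fin n) (Fin n) ℂ) :
    norm11 (B - C) ≤ norm11 B + norm11 C := by
  rw [norm11, norm11, norm11, ← Finset.sum_add_distrib]
  refine Finset.sum_le_sum fun i _ => ?_
  rw [← Finset.sum_add_distrib]
  refine Finset.sum_le_sum fun j _ => ?_
  rw [Matrix.sub_apply, sub_eq_add_neg]
  exact (norm_add_le _ _).trans (le_of_eq (by rw [norm_neg]))

lemma norm11_le_gz {A : Matrix (Fin n) (Fin n) ℂ} (hA : A.IsHermitian) :
    norm11 A ≤ gammaZero A := by
  refine le_csInf (gz_nonempty hA) fun r hr => ?_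
  obtain ⟨B, C, hB, hC, hBC, rfl⟩ := hr
  calc norm11 A = norm11 (B - C) := by rw [hBC]
    _ ≤ norm11 B + norm11 C := norm11_sub_le B C
    _ ≤ gammaPlus B + gammaPlus C := add_le_add (norm11_le_gp hB) (norm11_le_gp hC)

lemma gz_lip {A B : Matrix (Fin n) (Fin n) ℂ} (hA : A.IsHermitian) (hB : B.IsHermitian) :
    gammaZero A ≤ gammaZero B + 2 * norm11 (A - B) := by
  rw [← sub_le_iff_le_add]
  refine le_csInf (gz_nonempty hB) fun r hr => ?_
  obtain ⟨Bp, Bm, hBp, hBm, hBd, rfl⟩ := hr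
  rw [sub_le_iff_le_add]
  obtain ⟨P, Q, hP, hQ, hPQ, hcost⟩ := decomp (hA.sub hB)
  have hmem : gammaPlus (Bp + P) + gammaPlus (Bm + Q) ∈ gzSet A := by
    refine ⟨Bp + P, Bm + Q, hBp.add hP, hBm.add hQ, ?_, rfl⟩
    have h5 : A = B + (P - Q) := by rw [← hPQ]; abel
    rw [h5, hBd]; abel
  calc gammaZero A ≤ gammaPlus (Bp + P) + gammaPlus (Bm + Q) := gz_le hmem
    _ ≤ (gammaPlus Bp + gammaPlus P) + (gammaPlus Bm + gammaPlus Q) :=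
        add_le_add (gp_add hBp hP) (gp_add hBm hQ)
    _ = (gammaPlus Bp + gammaPlus Bm) + (gammaPlus P + gammaPlus Q) := by ring
    _ ≤ (gammaPlus Bp + gammaPlus Bm) + 2 * norm11 (A - B) := by linarith
    _ = gammaPlus Bp + gammaPlus Bm + 2 * norm11 (A - B) := by ring

lemma norm11_sub_comm (A B : Matrix (Fin n) (Fin n) ℂ) :
    norm11 (A - B) = norm11 (B - A) := by
  rw [norm11, norm11]
  refine Finset.sum_congr rfl fun i _ => Finset.sum_congr rfl fun j _ => ?_
  rw [Matrix.sub_apply, Matrix.sub_apply, norm_sub_rev]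


theorem stmt6 (n : ℕ) (hn : 1 ≤ n) :
    (∀ A : Matrix (Fin n) (Fin n) ℂ, A.IsHermitian → gammaZero A = 0 → A = 0) ∧
    (∀ A B : Matrix (Fin n) (Fin n) ℂ, A.IsHermitian → B.IsHermitian →
      |gammaZero A - gammaZero B| ≤ 2 * norm11 (A - B)) := by
  constructor
  · intro A hA h0
    have h1 : norm11 A ≤ 0 := by rw [← h0]; exact norm11_le_gz hA
    have h2 : ∀ i ∈ (Finset.univ : Finset (Fin n)),
        ∀ j ∈ (Finset.univ : Finset (Fin n)), ‖A i j‖ = 0 := by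
      have hz : norm11 A = 0 := le_antisymm h1
        (Finset.sum_nonneg fun i _ => Finset.sum_nonneg fun j _ => norm_nonneg _)
      rw [norm11] at hz
      have := (Finset.sum_eq_zero_iff_of_nonneg fun i _ =>
        Finset.sum_nonneg fun j _ => norm_nonneg (A i j)).mp hz
      intro i hi j hj
      exact (Finset.sum_eq_zero_iff_of_nonneg fun j _ =>
        norm_nonneg (A i j)).mp (this i hi) j hj
    ext i j
    simpa using h2 i (Finset.mem_univ i) j (Finset.mem_univ j)
  · intro A B hA hB
    rw [abs_sub_le_iff]
    constructor
    · have := gz_lip hA hB; linarith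
    · have := gz_lip hB hA; rw [norm11_sub_comm B A] at this; linarith
end

section
/- For the 2×2 real symmetric matrix A = [[0,1],[1,0]] (viewed as a complex Hermitian matrix), γ₀(A) = 4. Since ‖A‖₁,₁ = 2, this shows that the Lipschitz constant 2 in the inequality |γ₀(A) − γ₀(B)| ≤ 2‖A − B‖₁,₁ is attained. -/
open Matrix ComplexOrder

/-! ### Auxiliary lemmas -/

lemma entry_sum {m : ℕ} (g : Fin m → Fin 2 → ℂ) (i j : Fin 2) :
    (∑ k, vecMulVec (g k) (star (g k))) i j = ∑ k, g k i * (starRingEnd ℂ) (g k j) := by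
  simp [Matrix.sum_apply, vecMulVec_apply]

/-- Key inequality: any decomposition value is at least `4 |B 0 1|`. -/
lemma key {m : ℕ} (g : Fin m → Fin 2 → ℂ) :
    4 * ‖(∑ k, vecMulVec (g k) (star (g k))) 0 1‖ ≤ ∑ k, (l1n (g k))^2 := by
  have h1 : ‖(∑ k, vecMulVec (g k) (star (g k))) 0 1‖
      ≤ ∑ k, ‖g k 0‖ * ‖g k 1‖ := by
    rw [entry_sum]
    refine (norm_sum_le _ _).trans (le_of_eq ?_)
    refine Finset.sum_congr rfl fun k _ => ?_
    rw [norm_mul, Complex.norm_conj]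
  have h2 : ∑ k, 4 * (‖g k 0‖ * ‖g k 1‖) ≤ ∑ k, (l1n (g k))^2 := by
    refine Finset.sum_le_sum fun k _ => ?_
    have : l1n (g k) = ‖g k 0‖ + ‖g k 1‖ := by
      simp [l1n, Fin.sum_univ_two]
    rw [this]
    nlinarith [sq_nonneg (‖g k 0‖ - ‖g k 1‖)]
  calc 4 * ‖(∑ k, vecMulVec (g k) (star (g k))) 0 1‖
      ≤ 4 * ∑ k, ‖g k 0‖ * ‖g k 1‖ := by linarith
    _ = ∑ k, 4 * (‖g k 0‖ * ‖g k 1‖) := by rw [Finset.mul_sum]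
    _ ≤ _ := h2

lemma gammaPlus_bddBelow {n : ℕ} (B : Matrix (Fin n) (Fin n) ℂ) :
    BddBelow {r : ℝ | ∃ (m : ℕ) (g : Fin m → Fin n → ℂ),
      B = ∑ k, vecMulVec (g k) (star (g k)) ∧ r = ∑ k, (l1n (g k)) ^ 2} := by
  refine ⟨0, ?_⟩
  rintro r ⟨m, g, -, rfl⟩
  positivity

lemma gammaPlus_lb (B : Matrix (Fin 2) (Fin 2) ℂ) (hB : B.PosSemidef) :
    4 * ‖B 0 1‖ ≤ gammaPlus B := by
  obtain ⟨m, v, hM⟩ := posSemidef_iff_eq_sum_vecMulVec.mp hB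
  refine le_csInf ⟨_, m, v, hM, rfl⟩ ?_
  · rintro r ⟨m, g, hg, rfl⟩
    rw [hg]; exact key g

noncomputable def xx : ℂ := ((Real.sqrt 2)⁻¹ : ℝ)

lemma xx_mul : xx * xx = 1/2 := by
  unfold xx
  rw [← Complex.ofReal_mul, ← Real.sqrt_inv, Real.mul_self_sqrt (by norm_num)]
  norm_num

lemma xx_abs : ‖xx‖ = (Real.sqrt 2)⁻¹ := by
  unfold xx
  rw [Complex.norm_real, Real.norm_of_nonneg (by positivity)]

lemma xx_conj : (starRingEnd ℂ) xx = xx := Complex.conj_ofReal _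

lemma B_decomp : (!![(1/2 : ℂ), 1/2; 1/2, 1/2]) =
    ∑ k : Fin 1, vecMulVec (![![xx, xx]] k) (star (![![xx, xx]] k)) := by
  rw [Fin.sum_univ_one]
  ext i j
  fin_cases i <;> fin_cases j <;>
    simp [vecMulVec_apply, xx_conj, xx_mul]

lemma C_decomp : (!![(1/2 : ℂ), -(1/2); -(1/2), 1/2]) =
    ∑ k : Fin 1, vecMulVec (![![xx, -xx]] k) (star (![![xx, -xx]] k)) := by
  rw [Fin.sum_univ_one]
  ext i j
  fin_cases i <;> fin_cases j <;>
    simp [vecMulVec_apply, xx_conj, xx_mul]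

lemma B_val : ∑ k : Fin 1, (l1n (![![xx, xx]] k))^2 = 2 := by
  have h2 : Real.sqrt 2 * Real.sqrt 2 = 2 := Real.mul_self_sqrt (by norm_num)
  have hpos : (0:ℝ) < Real.sqrt 2 := by positivity
  simp [l1n, Fin.sum_univ_two, xx_abs]
  field_simp
  nlinarith

lemma C_val : ∑ k : Fin 1, (l1n (![![xx, -xx]] k))^2 = 2 := by
  have h2 : Real.sqrt 2 * Real.sqrt 2 = 2 := Real.mul_self_sqrt (by norm_num)
  have hpos : (0:ℝ) < Real.sqrt 2 := by positivity
  simp [l1n, Fin.sum_univ_two, xx_abs]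
  field_simp
  nlinarith

lemma psd_outer {n : ℕ} (v : Fin n → ℂ) : (vecMulVec v (star v)).PosSemidef := by
  rw [vecMulVec_eq (Fin 1), ← conjTranspose_replicateCol]
  exact posSemidef_self_mul_conjTranspose _

lemma B_psd : (!![(1/2 : ℂ), 1/2; 1/2, 1/2]).PosSemidef := by
  rw [B_decomp, Fin.sum_univ_one]; exact psd_outer _

lemma C_psd : (!![(1/2 : ℂ), -(1/2); -(1/2), 1/2]).PosSemidef := by
  rw [C_decomp, Fin.sum_univ_one]; exact psd_outer _

lemma abs_half : ‖(1/2 : ℂ)‖ = 1/2 := by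
  rw [norm_div]; simp

lemma gammaPlus_B : gammaPlus (!![(1/2 : ℂ), 1/2; 1/2, 1/2]) = 2 := by
  refine le_antisymm (csInf_le (gammaPlus_bddBelow _) ⟨1, _, B_decomp, B_val.symm⟩) ?_
  have := gammaPlus_lb _ B_psd
  rw [show (!![(1/2 : ℂ), 1/2; 1/2, 1/2]) 0 1 = 1/2 from rfl, abs_half] at this
  linarith

lemma gammaPlus_C : gammaPlus (!![(1/2 : ℂ), -(1/2); -(1/2), 1/2]) = 2 := by
  refine le_antisymm (csInf_le (gammaPlus_bddBelow _) ⟨1, _, C_decomp, C_val.symm⟩) ?_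
  have := gammaPlus_lb _ C_psd
  rw [show (!![(1/2 : ℂ), -(1/2); -(1/2), 1/2]) 0 1 = -(1/2) from rfl, norm_neg,
    abs_half] at this
  linarith

theorem stmt7 :
    gammaZero (!![(0 : ℂ), 1; 1, 0]) = 4 ∧ norm11 (!![(0 : ℂ), 1; 1, 0]) = 2 := by
  constructor
  · refine IsLeast.csInf_eq ⟨⟨_, _, B_psd, C_psd, ?_, ?_⟩, ?_⟩
    · ext i j
      fin_cases i <;> fin_cases j <;> simp [Matrix.sub_apply] <;> norm_num
    · rw [gammaPlus_B, gammaPlus_C]; norm_num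
    · rintro r ⟨B, C, hB, hC, hA, rfl⟩
      have h01 : B 0 1 - C 0 1 = 1 := by
        have : (!![(0 : ℂ), 1; 1, 0]) 0 1 = (B - C) 0 1 := by rw [← hA]
        simpa [Matrix.sub_apply] using this.symm
      have hb := gammaPlus_lb B hB
      have hc := gammaPlus_lb C hC
      have htri : (1:ℝ) ≤ ‖B 0 1‖ + ‖C 0 1‖ := by
        have := norm_add_le (B 0 1) (-(C 0 1))
        rw [← sub_eq_add_neg, h01, norm_neg] at this
        simpa using this
      linarith
  · simp [norm11, Fin.sum_univ_two]
    norm_num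
end

section
/- Let n ≥ 1 and let T be an n×n complex positive semidefinite Hermitian matrix. Then the infimum defining γ₊(T) is attained by a decomposition with at most n² + 1 rank-one terms: there exist vectors g₁, …, g_{n²+1} ∈ ℂⁿ such that T = Σ_{k=1}^{n²+1} g_k g_k* and Σ_{k=1}^{n²+1} ‖g_k‖₁² = γ₊(T). -/
open Matrix ComplexOrder

section Stmt8Aux

open Finset

lemma cone_carath {E : Type*} [AddCommGroup E] [Module ℝ E] [FiniteDimensional ℝ E]
    (S : Set E) (h0 : (0:E) ∈ S) (hS : ∀ c : ℝ, 0 ≤ c → ∀ s ∈ S, c • s ∈ S)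
    (d : ℕ) (hd : Module.finrank ℝ E ≤ d) :
    ∀ m (v : Fin m → E), (∀ k, v k ∈ S) →
      ∃ w : Fin d → E, (∀ k, w k ∈ S) ∧ ∑ k, w k = ∑ k, v k := by
  intro m
  induction m with
  | zero => exact fun v hv => ⟨fun _ => 0, fun _ => h0, by simp⟩
  | succ m ih =>
    intro v hv
    by_cases hmd : m + 1 ≤ d
    · set u : ℕ → E := fun j => if h : j < m + 1 then v ⟨j, h⟩ else 0 with hu
      refine ⟨fun k => u k, fun k => ?_, ?_⟩
      · by_cases h : (k : ℕ) < m + 1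
        · show (if h : (k : ℕ) < m + 1 then v ⟨k, h⟩ else 0) ∈ S
          rw [dif_pos h]; exact hv ⟨k, h⟩
        · show (if h : (k : ℕ) < m + 1 then v ⟨k, h⟩ else 0) ∈ S
          rw [dif_neg h]; exact h0
      · have h1 : ∑ k : Fin (m+1), v k = ∑ k : Fin (m+1), u k := by
          refine Finset.sum_congr rfl fun k _ => ?_
          show v k = if h : (k : ℕ) < m + 1 then v ⟨k, h⟩ else 0
          rw [dif_pos k.isLt]
        rw [h1, Fin.sum_univ_eq_sum_range (fun j => u j) d,
          Fin.sum_univ_eq_sum_range (fun j => u j) (m+1)]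
        exact (Finset.sum_subset (Finset.range_subset_range.mpr hmd)
          (fun j _ hj => by simp only [hu]; rw [dif_neg (by simpa using hj)])).symm
    · push_neg at hmd
      have hdep : ¬ LinearIndependent ℝ v := by
        intro h
        have := h.fintype_card_le_finrank
        simp only [Fintype.card_fin] at this
        omega
      obtain ⟨c, hc0, i0, hci0⟩ := Fintype.not_linearIndependent_iff.mp hdep
      obtain ⟨c, hc0, i1, hci1⟩ : ∃ c : Fin (m+1) → ℝ, ∑ i, c i • v i = 0 ∧ ∃ i, 0 < c i := by
        rcases lt_trichotomy (c i0) 0 with h | h | h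
        · refine ⟨-c, ?_, i0, by simpa using h⟩
          simp [neg_smul, Finset.sum_neg_distrib, hc0]
        · exact absurd h hci0
        · exact ⟨c, hc0, i0, h⟩
      obtain ⟨k0, -, hk0⟩ := Finset.exists_max_image Finset.univ c ⟨i1, Finset.mem_univ i1⟩
      have hck0 : 0 < c k0 := lt_of_lt_of_le hci1 (hk0 i1 (Finset.mem_univ i1))
      set w' : Fin (m+1) → E := fun k => (1 - c k / c k0) • v k with hw'
      have hw'S : ∀ k, w' k ∈ S := fun k =>
        hS _ (by have := hk0 k (Finset.mem_univ k); rw [sub_nonneg, div_le_one hck0]; exact this)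
          _ (hv k)
      have hz : ∑ k, (c k / c k0) • v k = 0 := by
        have h2 : ∑ k, (c k / c k0) • v k = (c k0)⁻¹ • ∑ k, c k • v k := by
          rw [Finset.smul_sum]
          exact Finset.sum_congr rfl fun k _ => by rw [smul_smul, div_eq_inv_mul]
        rw [h2, hc0, smul_zero]
      have hw'sum : ∑ k, w' k = ∑ k, v k := by
        simp only [hw', sub_smul, one_smul, Finset.sum_sub_distrib, hz, sub_zero]
      have hw'k0 : w' k0 = 0 := by simp [hw', div_self hck0.ne']
      obtain ⟨w, hwS, hwsum⟩ := ih (fun i => w' (k0.succAbove i)) (fun i => hw'S _)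
      refine ⟨w, hwS, ?_⟩
      rw [hwsum, ← hw'sum, Fin.sum_univ_succAbove w' k0, hw'k0, zero_add]

open Matrix

/-- The real subspace of Hermitian matrices. -/
noncomputable def hermSub (n : ℕ) : Submodule ℝ (Matrix (Fin n) (Fin n) ℂ) where
  carrier := {A | Aᴴ = A}
  add_mem' := by
    intro a b ha hb
    simp only [Set.mem_setOf_eq] at *
    rw [conjTranspose_add, ha, hb]
  zero_mem' := by simp
  smul_mem' := by
    intro c A hA
    simp only [Set.mem_setOf_eq] at *
    ext i j
    simp only [conjTranspose_apply, Matrix.smul_apply]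
    rw [star_smul, star_trivial, ← conjTranspose_apply, hA]

/-- Real-linear coordinates on Hermitian matrices. -/
noncomputable def hermCoord (n : ℕ) : hermSub n →ₗ[ℝ] (Fin n × Fin n → ℝ) where
  toFun A := fun p => if p.1 ≤ p.2 then ((A : Matrix (Fin n) (Fin n) ℂ) p.1 p.2).re
    else ((A : Matrix (Fin n) (Fin n) ℂ) p.1 p.2).im
  map_add' A B := by
    funext p
    by_cases h : p.1 ≤ p.2 <;> simp [h]
  map_smul' c A := by
    funext p
    by_cases h : p.1 ≤ p.2 <;>
      simp [h, Complex.real_smul, Complex.mul_re, Complex.mul_im]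

lemma hermCoord_injective (n : ℕ) : Function.Injective (hermCoord n) := by
  rw [← LinearMap.ker_eq_bot, LinearMap.ker_eq_bot']
  intro A hA
  have hH : (A : Matrix (Fin n) (Fin n) ℂ)ᴴ = A := A.2
  have key : ∀ i j : Fin n, i ≤ j → (A : Matrix (Fin n) (Fin n) ℂ) i j = 0 := by
    intro i j hij
    have hre : ((A : Matrix (Fin n) (Fin n) ℂ) i j).re = 0 := by
      have := congrFun hA (i, j)
      simpa [hermCoord, hij] using this
    rcases eq_or_lt_of_le hij with rfl | hlt
    · have him : ((A : Matrix (Fin n) (Fin n) ℂ) i i).im = 0 := by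
        have h2 : starRingEnd ℂ ((A : Matrix (Fin n) (Fin n) ℂ) i i)
            = (A : Matrix (Fin n) (Fin n) ℂ) i i := by
          have := congrFun (congrFun hH i) i
          simpa [conjTranspose_apply] using this
        exact Complex.conj_eq_iff_im.mp h2
      exact Complex.ext hre him
    · have him : ((A : Matrix (Fin n) (Fin n) ℂ) i j).im = 0 := by
        have hji : ¬ (j ≤ i) := not_le.mpr hlt
        have h1 : ((A : Matrix (Fin n) (Fin n) ℂ) j i).im = 0 := by
          have := congrFun hA (j, i)
          simpa [hermCoord, hji] using this
        have h2 : (A : Matrix (Fin n) (Fin n) ℂ) i j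
            = starRingEnd ℂ ((A : Matrix (Fin n) (Fin n) ℂ) j i) := by
          have := congrFun (congrFun hH i) j
          simpa [conjTranspose_apply] using this.symm
        rw [h2]
        simp [h1]
      exact Complex.ext hre him
  have : (A : Matrix (Fin n) (Fin n) ℂ) = 0 := by
    ext i j
    rcases le_or_gt i j with h | h
    · simpa using key i j h
    · have h2 : (A : Matrix (Fin n) (Fin n) ℂ) i j
          = starRingEnd ℂ ((A : Matrix (Fin n) (Fin n) ℂ) j i) := by
        have := congrFun (congrFun hH i) j
        simpa [conjTranspose_apply] using this.symm
      rw [h2, key j i h.le]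
      simp
  exact Subtype.ext this

lemma finrank_hermSub_prod_le (n : ℕ) :
    Module.finrank ℝ (hermSub n × ℝ) ≤ n ^ 2 + 1 := by
  rw [Module.finrank_prod, Module.finrank_self]
  have := LinearMap.finrank_le_finrank_of_injective (hermCoord_injective n)
  have h2 : Module.finrank ℝ (hermSub n) ≤ n ^ 2 := by simpa [Module.finrank_pi, sq] using this
  exact Nat.add_le_add_right h2 1

lemma vecMulVec_mem_hermSub {n : ℕ} (g : Fin n → ℂ) :
    vecMulVec g (star g) ∈ hermSub n := by
  show (vecMulVec g (star g))ᴴ = vecMulVec g (star g)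
  ext i j
  simp only [conjTranspose_apply, vecMulVec_apply, Pi.star_apply, star_mul', star_star]
  ring

/-- The cone of pairs (g g*, ‖g‖₁²). -/
def coneS (n : ℕ) : Set (hermSub n × ℝ) :=
  {p | ∃ g : Fin n → ℂ, (p.1 : Matrix (Fin n) (Fin n) ℂ) = vecMulVec g (star g)
      ∧ p.2 = (l1n g) ^ 2}

lemma zero_mem_coneS (n : ℕ) : (0 : hermSub n × ℝ) ∈ coneS n := by
  refine ⟨0, ?_, ?_⟩
  · ext i j; simp [vecMulVec_apply]
  · simp [l1n]

lemma l1n_smul {n : ℕ} (c : ℝ) (hc : 0 ≤ c) (g : Fin n → ℂ) :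
    l1n ((c : ℂ) • g) = c * l1n g := by
  simp only [l1n, Pi.smul_apply, smul_eq_mul, norm_mul, Finset.mul_sum]
  exact Finset.sum_congr rfl fun i _ => by
    rw [Complex.norm_of_nonneg hc]

lemma smul_mem_coneS (n : ℕ) : ∀ c : ℝ, 0 ≤ c → ∀ p ∈ coneS n, c • p ∈ coneS n := by
  rintro c hc p ⟨g, hg1, hg2⟩
  refine ⟨(Real.sqrt c : ℂ) • g, ?_, ?_⟩
  · show ((c • p.1 : hermSub n) : Matrix (Fin n) (Fin n) ℂ) = _
    rw [Submodule.coe_smul, hg1]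
    ext i j
    simp only [Matrix.smul_apply, vecMulVec_apply, Pi.star_apply, Pi.smul_apply,
      smul_eq_mul, star_mul', Complex.star_def, Complex.conj_ofReal, Complex.real_smul]
    have hsq : (Real.sqrt c : ℂ) * (Real.sqrt c : ℂ) = (c : ℂ) := by
      rw [← Complex.ofReal_mul, Real.mul_self_sqrt hc]
    linear_combination (-(g i * (starRingEnd ℂ) (g j))) * hsq
  · show c • p.2 = _
    rw [smul_eq_mul, hg2, l1n_smul _ (Real.sqrt_nonneg c), mul_pow,
      Real.sq_sqrt hc]

/-- Carathéodory-type reduction: any finite Gram decomposition can be rewritten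
with `n^2 + 1` terms, preserving both the matrix and the ℓ¹ cost. -/
lemma reduce {n m : ℕ} (g : Fin m → Fin n → ℂ) :
    ∃ g' : Fin (n ^ 2 + 1) → Fin n → ℂ,
      (∑ k, vecMulVec (g' k) (star (g' k)) = ∑ k, vecMulVec (g k) (star (g k)))
      ∧ ∑ k, (l1n (g' k)) ^ 2 = ∑ k, (l1n (g k)) ^ 2 := by
  obtain ⟨w, hwS, hwsum⟩ := cone_carath (coneS n) (zero_mem_coneS n) (smul_mem_coneS n)
    (n ^ 2 + 1) (finrank_hermSub_prod_le n) m
    (fun k => (⟨vecMulVec (g k) (star (g k)), vecMulVec_mem_hermSub (g k)⟩, (l1n (g k)) ^ 2))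
    (fun k => ⟨g k, rfl, rfl⟩)
  choose g' hg'1 hg'2 using hwS
  refine ⟨g', ?_, ?_⟩
  · have := congrArg (fun p : hermSub n × ℝ => ((p.1 : Matrix (Fin n) (Fin n) ℂ))) hwsum
    simpa [Prod.fst_sum, Submodule.coe_sum, hg'1] using this
  · have := congrArg Prod.snd hwsum
    simpa [Prod.snd_sum, hg'2] using this

end Stmt8Aux


section Stmt8Analysis

open Matrix Finset

lemma continuous_cost (n N : ℕ) :
    Continuous fun g : Fin N → Fin n → ℂ => ∑ k, (l1n (g k)) ^ 2 := by
  apply continuous_finset_sum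
  intro k _
  apply Continuous.pow
  apply continuous_finset_sum
  intro i _
  exact continuous_norm.comp ((continuous_apply i).comp (continuous_apply k))

lemma isClosed_K (n N : ℕ) (T : Matrix (Fin n) (Fin n) ℂ) :
    IsClosed {g : Fin N → Fin n → ℂ | T = ∑ k, vecMulVec (g k) (star (g k))} := by
  apply isClosed_eq continuous_const
  apply continuous_matrix
  intro i j
  have h : (fun g : Fin N → Fin n → ℂ => (∑ k, vecMulVec (g k) (star (g k))) i j)
      = fun g => ∑ k, g k i * star (g k j) := by
    funext g; simp [Matrix.sum_apply, vecMulVec_apply]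
  rw [h]
  apply continuous_finset_sum
  intro k _
  fun_prop

lemma bounded_K (n N : ℕ) (T : Matrix (Fin n) (Fin n) ℂ) :
    Bornology.IsBounded {g : Fin N → Fin n → ℂ | T = ∑ k, vecMulVec (g k) (star (g k))} := by
  rw [isBounded_iff_forall_norm_le]
  refine ⟨Real.sqrt (∑ i, (T i i).re), ?_⟩
  intro g hg
  have hg' : T = ∑ k, vecMulVec (g k) (star (g k)) := hg
  have key : ∀ i : Fin n, (T i i).re = ∑ k, Complex.normSq (g k i) := by
    intro i
    have h0 : T i i = ∑ k, (Complex.normSq (g k i) : ℂ) := by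
      have h1 := congrArg (fun M : Matrix (Fin n) (Fin n) ℂ => M i i) hg'
      simp only [Matrix.sum_apply, vecMulVec_apply, Pi.star_apply] at h1
      rw [h1]
      exact Finset.sum_congr rfl fun k _ => by
        rw [Complex.star_def, Complex.mul_conj]
    rw [h0, ← Complex.ofReal_sum, Complex.ofReal_re]
  have hnorm : ∀ (k : Fin N) (i : Fin n), ‖g k i‖ ≤ Real.sqrt (∑ i, (T i i).re) := by
    intro k i
    have h1 : Complex.normSq (g k i) ≤ (T i i).re := by
      rw [key i]
      exact Finset.single_le_sum (f := fun k' => Complex.normSq (g k' i))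
        (fun k _ => Complex.normSq_nonneg _) (mem_univ k)
    have h2 : (T i i).re ≤ ∑ i', (T i' i').re := by
      refine Finset.single_le_sum (f := fun i' => (T i' i').re) (fun i' _ => ?_) (mem_univ i)
      show 0 ≤ (T i' i').re
      rw [key i']
      exact Finset.sum_nonneg fun k _ => Complex.normSq_nonneg _
    calc ‖g k i‖ = Real.sqrt (Complex.normSq (g k i)) := by
          rw [Complex.norm_def]
      _ ≤ _ := Real.sqrt_le_sqrt (h1.trans h2)
  refine (pi_norm_le_iff_of_nonneg (Real.sqrt_nonneg _)).mpr fun k =>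
    (pi_norm_le_iff_of_nonneg (Real.sqrt_nonneg _)).mpr fun i => hnorm k i

end Stmt8Analysis

theorem stmt8 (n : ℕ) (hn : 1 ≤ n) (T : Matrix (Fin n) (Fin n) ℂ) (hT : T.PosSemidef) :
    ∃ g : Fin (n ^ 2 + 1) → Fin n → ℂ,
      T = ∑ k, vecMulVec (g k) (star (g k)) ∧
      ∑ k, (l1n (g k)) ^ 2 = gammaPlus T := by
  classical
  set K : Set (Fin (n ^ 2 + 1) → Fin n → ℂ) :=
    {g | T = ∑ k, vecMulVec (g k) (star (g k))} with hKdef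
  -- K is nonempty
  have hKne : K.Nonempty := by
    obtain ⟨m0, g0, hdec⟩ := Matrix.posSemidef_iff_eq_sum_vecMulVec.mp hT
    obtain ⟨g1, h1, -⟩ := reduce g0
    exact ⟨g1, hdec.trans h1.symm⟩
  have hKc : IsCompact K :=
    Metric.isCompact_of_isClosed_isBounded (isClosed_K n _ T) (bounded_K n _ T)
  obtain ⟨gm, hgmK, hgmmin⟩ := hKc.exists_isMinOn hKne
    ((continuous_cost n (n ^ 2 + 1)).continuousOn)
  set v : ℝ := ∑ k, (l1n (gm k)) ^ 2 with hv
  set Sr : Set ℝ := {r : ℝ | ∃ (m : ℕ) (g : Fin m → Fin n → ℂ),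
    T = ∑ k, vecMulVec (g k) (star (g k)) ∧ r = ∑ k, (l1n (g k)) ^ 2} with hSr
  have hmem : v ∈ Sr := ⟨n ^ 2 + 1, gm, hgmK, rfl⟩
  have hlb : ∀ r ∈ Sr, v ≤ r := by
    rintro r ⟨m, h, hdec, rfl⟩
    obtain ⟨h', hh1, hh2⟩ := reduce h
    have hmemK : h' ∈ K := hdec.trans hh1.symm
    calc v ≤ ∑ k, (l1n (h' k)) ^ 2 := hgmmin hmemK
      _ = _ := hh2
  refine ⟨gm, hgmK, ?_⟩
  show v = gammaPlus T
  rw [gammaPlus, ← hSr]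
  exact le_antisymm (le_csInf ⟨v, hmem⟩ hlb) (csInf_le ⟨v, hlb⟩ hmem)
end

section
/- Let n ≥ 1, let A be an n×n complex positive semidefinite Hermitian matrix, and let y ∈ ℂⁿ. Then A − y y* is positive semidefinite if and only if there exists x ∈ ℂⁿ such that y = A x and x* A x ≤ 1. Moreover, if y = A x with x* A x = 1, then rank(A − y y*) < rank(A). -/
open Matrix ComplexOrder

namespace Stmt9Aux

variable {n : ℕ}

lemma real_of_nonneg {w : ℂ} (h : 0 ≤ w) : w = (w.re : ℂ) := by
  rw [Complex.nonneg_iff] at h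
  apply Complex.ext
  · simp
  · simp [← h.2]

lemma vecMulVec_mulVec (u v z : Fin n → ℂ) :
    (vecMulVec u v) *ᵥ z = (v ⬝ᵥ z) • u := by
  ext i
  simp only [mulVec, dotProduct, vecMulVec_apply, Pi.smul_apply, smul_eq_mul, Finset.sum_mul]
  exact Finset.sum_congr rfl fun j _ => by ring

lemma quad (B : Matrix (Fin n) (Fin n) ℂ) (y z : Fin n → ℂ) :
    star z ⬝ᵥ (B - vecMulVec y (star y)) *ᵥ z
      = star z ⬝ᵥ B *ᵥ z - (star z ⬝ᵥ y) * (star y ⬝ᵥ z) := by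
  rw [sub_mulVec, dotProduct_sub, vecMulVec_mulVec, dotProduct_smul, smul_eq_mul, mul_comm]

lemma herm_dot {A : Matrix (Fin n) (Fin n) ℂ} (hA : A.IsHermitian) (x z : Fin n → ℂ) :
    star (A *ᵥ x) ⬝ᵥ z = star x ⬝ᵥ A *ᵥ z := by
  rw [star_mulVec, hA.eq, ← dotProduct_mulVec]

lemma cs0 (a b : Fin n → ℂ) :
    (star a ⬝ᵥ b) * (star b ⬝ᵥ a) ≤ (star a ⬝ᵥ a) * (star b ⬝ᵥ b) := by
  have ha := dotProduct_star_self_nonneg a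
  have hb := dotProduct_star_self_nonneg b
  have h := inner_mul_inner_self_le (𝕜 := ℂ)
    ((WithLp.equiv 2 (Fin n → ℂ)).symm a) ((WithLp.equiv 2 (Fin n → ℂ)).symm b)
  simp only [WithLp.equiv_symm_apply, EuclideanSpace.inner_toLp_toLp, dotProduct_comm _ (star _)] at h
  simp only [RCLike.re_to_complex] at h
  rw [star_dotProduct b a, real_of_nonneg ha, real_of_nonneg hb, ← Complex.ofReal_mul]
  have key : (star a ⬝ᵥ b) * star (star a ⬝ᵥ b)
      = ((‖star a ⬝ᵥ b‖ ^ 2 : ℝ) : ℂ) := by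
    rw [Complex.star_def, Complex.mul_conj, Complex.sq_norm]
  rw [key, Complex.real_le_real, Complex.sq_norm]
  calc Complex.normSq (star a ⬝ᵥ b)
      = ‖star a ⬝ᵥ b‖ * ‖star b ⬝ᵥ a‖ := by
        rw [star_dotProduct b a, norm_star, ← Complex.sq_norm, sq]
    _ ≤ _ := h

lemma cs {A : Matrix (Fin n) (Fin n) ℂ} (hA : A.PosSemidef) (u w : Fin n → ℂ) :
    (star u ⬝ᵥ A *ᵥ w) * (star w ⬝ᵥ A *ᵥ u) ≤ (star u ⬝ᵥ A *ᵥ u) * (star w ⬝ᵥ A *ᵥ w) := by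
  obtain ⟨B, hB⟩ : ∃ B : Matrix (Fin n) (Fin n) ℂ, A = star B * B := by
    open scoped MatrixOrder in exact CStarAlgebra.nonneg_iff_eq_star_mul_self.mp hA.nonneg
  have hfac : ∀ p q : Fin n → ℂ,
      star p ⬝ᵥ A *ᵥ q = star (B *ᵥ p) ⬝ᵥ (B *ᵥ q) := by
    intro p q
    rw [star_mulVec, ← dotProduct_mulVec, mulVec_mulVec, hB, star_eq_conjTranspose]
  rw [hfac u w, hfac w u, hfac u u, hfac w w]
  exact cs0 _ _

end Stmt9Aux

theorem stmt9 (n : ℕ) (hn : 1 ≤ n) (A : Matrix (Fin n) (Fin n) ℂ) (hA : A.PosSemidef)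
    (y : Fin n → ℂ) :
    ((A - vecMulVec y (star y)).PosSemidef ↔
      ∃ x : Fin n → ℂ, y = A.mulVec x ∧ star x ⬝ᵥ A.mulVec x ≤ 1) ∧
    (∀ x : Fin n → ℂ, y = A.mulVec x → star x ⬝ᵥ A.mulVec x = 1 →
      (A - vecMulVec y (star y)).rank < A.rank) := by
  have hquad : ∀ z, star z ⬝ᵥ (A - vecMulVec y (star y)) *ᵥ z
      = star z ⬝ᵥ A *ᵥ z - (star z ⬝ᵥ y) * (star y ⬝ᵥ z) := fun z => Stmt9Aux.quad A y z
  constructor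
  · constructor
    · intro hM
      have claim1 : ∀ z, A *ᵥ z = 0 → star z ⬝ᵥ y = 0 := by
        intro z hz
        have h0 := hM.dotProduct_mulVec_nonneg z
        rw [hquad z, hz, dotProduct_zero, zero_sub, star_dotProduct y z,
          Complex.star_def, Complex.mul_conj, Complex.nonneg_iff] at h0
        have h1 := h0.1
        simp only [Complex.neg_re, Complex.ofReal_re] at h1
        have : Complex.normSq (star z ⬝ᵥ y) = 0 := by
          nlinarith [Complex.normSq_nonneg (star z ⬝ᵥ y)]
        exact Complex.normSq_eq_zero.mp this
      obtain ⟨x, hx⟩ : ∃ x : Fin n → ℂ, A *ᵥ x = y := by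
        set T := Matrix.toEuclideanLin A with hT
        have hsym : T.IsSymmetric := Matrix.isHermitian_iff_isSymmetric.mp hA.1
        have hle : LinearMap.range T ≤ (LinearMap.ker T)ᗮ := by
          rintro _ ⟨w, rfl⟩
          rw [Submodule.mem_orthogonal]
          intro u hu
          rw [← hsym u w, LinearMap.mem_ker.mp hu, inner_zero_left]
        have heq : LinearMap.range T = (LinearMap.ker T)ᗮ := by
          apply Submodule.eq_of_le_of_finrank_eq hle
          have h1 := LinearMap.finrank_range_add_finrank_ker T
          have h2 := Submodule.finrank_add_finrank_orthogonal (LinearMap.ker T)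
          omega
        have hy' : (WithLp.equiv 2 (Fin n → ℂ)).symm y ∈ (LinearMap.ker T)ᗮ := by
          rw [Submodule.mem_orthogonal]
          intro u hu
          have hu0 : A *ᵥ (WithLp.equiv 2 (Fin n → ℂ) u) = 0 := congrArg WithLp.ofLp (LinearMap.mem_ker.mp hu)
          have := claim1 (WithLp.equiv 2 (Fin n → ℂ) u) hu0
          simpa [EuclideanSpace.inner_eq_star_dotProduct, dotProduct_comm y] using this
        rw [← heq] at hy'
        obtain ⟨x, hx⟩ := hy'
        exact ⟨x, congrArg WithLp.ofLp hx⟩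
      refine ⟨x, hx.symm, ?_⟩
      have h0 := hM.dotProduct_mulVec_nonneg x
      have e1 : star y ⬝ᵥ x = star x ⬝ᵥ A *ᵥ x := by
        rw [← hx, Stmt9Aux.herm_dot hA.1 x x]
      have e2 : star x ⬝ᵥ y = star x ⬝ᵥ A *ᵥ x := by rw [← hx]
      rw [hquad x, e1, e2] at h0
      have htr := Stmt9Aux.real_of_nonneg (hA.dotProduct_mulVec_nonneg x)
      set r := (star x ⬝ᵥ A *ᵥ x).re with hr
      have hrnn : 0 ≤ r := (Complex.nonneg_iff.mp (hA.dotProduct_mulVec_nonneg x)).1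
      rw [htr] at h0
      rw [← Complex.ofReal_mul, ← Complex.ofReal_sub, Complex.nonneg_iff] at h0
      have h1 := h0.1
      simp only [Complex.ofReal_re] at h1
      have hr1 : r ≤ 1 := by nlinarith
      rw [show (A.mulVec x) = A *ᵥ x from rfl, htr]
      calc ((r : ℂ)) ≤ ((1 : ℝ) : ℂ) := Complex.real_le_real.mpr hr1
        _ = 1 := by norm_num
    · rintro ⟨x, hy, hle⟩
      have hherm : (A - vecMulVec y (star y)).IsHermitian := by
        apply hA.1.sub
        ext i j
        simp [conjTranspose_apply, vecMulVec_apply, mul_comm]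
      refine PosSemidef.of_dotProduct_mulVec_nonneg hherm fun z => ?_
      rw [hquad z]
      have e1 : star y ⬝ᵥ z = star x ⬝ᵥ A *ᵥ z := by
        rw [hy, Stmt9Aux.herm_dot hA.1 x z]
      have e2 : star z ⬝ᵥ y = star z ⬝ᵥ A *ᵥ x := by rw [hy]
      rw [e1, e2, sub_nonneg]
      calc (star z ⬝ᵥ A *ᵥ x) * (star x ⬝ᵥ A *ᵥ z)
          ≤ (star z ⬝ᵥ A *ᵥ z) * (star x ⬝ᵥ A *ᵥ x) := Stmt9Aux.cs hA z x
        _ ≤ (star z ⬝ᵥ A *ᵥ z) * 1 := mul_le_mul_of_nonneg_left hle (hA.dotProduct_mulVec_nonneg z)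
        _ = star z ⬝ᵥ A *ᵥ z := mul_one _
  · intro x hy hx1
    have hne : A *ᵥ x ≠ 0 := by
      intro h
      rw [show A.mulVec x = A *ᵥ x from rfl, h, dotProduct_zero] at hx1
      exact one_ne_zero hx1.symm
    have hker_le : LinearMap.ker A.mulVecLin ≤
        LinearMap.ker (A - vecMulVec y (star y)).mulVecLin := by
      intro z hz
      rw [LinearMap.mem_ker, mulVecLin_apply] at hz ⊢
      have hzy : star z ⬝ᵥ y = 0 := by
        rw [hy, show A.mulVec x = A *ᵥ x from rfl, ← Stmt9Aux.herm_dot hA.1 z x, hz,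
          star_zero, zero_dotProduct]
      have hyz : star y ⬝ᵥ z = 0 := by
        rw [star_dotProduct y z, hzy, star_zero]
      rw [sub_mulVec, Stmt9Aux.vecMulVec_mulVec, hyz, zero_smul, sub_zero, hz]
    have hxM : (A - vecMulVec y (star y)) *ᵥ x = 0 := by
      have hyx : star y ⬝ᵥ x = 1 := by
        rw [star_dotProduct y x, hy, hx1, star_one]
      rw [sub_mulVec, Stmt9Aux.vecMulVec_mulVec, hyx, one_smul, ← hy, sub_self]
    have hxnot : x ∉ LinearMap.ker A.mulVecLin := by
      intro h
      exact hne (by simpa [mulVecLin_apply] using LinearMap.mem_ker.mp h)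
    have hlt : LinearMap.ker A.mulVecLin <
        LinearMap.ker (A - vecMulVec y (star y)).mulVecLin :=
      SetLike.lt_iff_le_and_exists.mpr
        ⟨hker_le, x, LinearMap.mem_ker.mpr (by simpa [mulVecLin_apply, sub_mulVec] using hxM), hxnot⟩
    have hrank := Submodule.finrank_lt_finrank_of_lt hlt
    have h1 := LinearMap.finrank_range_add_finrank_ker (A - vecMulVec y (star y)).mulVecLin
    have h2 := LinearMap.finrank_range_add_finrank_ker A.mulVecLin
    unfold Matrix.rank
    omega
end

section
/- Let n ≥ 1, let T be an n×n complex positive definite Hermitian matrix, and set δ = λ_min(T)/2 > 0, where λ_min(T) is the smallest eigenvalue of T. Then for every n×n complex positive definite Hermitian matrix S with ‖T − S‖_Fr ≤ δ one has |γ₊(T) − γ₊(S)| ≤ ((n/δ)·trace(T) + 2·n^{3/2})·‖T − S‖_Fr. In particular γ₊ is continuous on the set of positive definite Hermitian matrices. -/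
open Matrix ComplexOrder

namespace Aux

variable {n : ℕ}

def gset (A : Matrix (Fin n) (Fin n) ℂ) : Set ℝ :=
  {r : ℝ | ∃ (m : ℕ) (g : Fin m → Fin n → ℂ),
    A = ∑ k, vecMulVec (g k) (star (g k)) ∧ r = ∑ k, (l1n (g k)) ^ 2}

lemma gammaPlus_eq (A : Matrix (Fin n) (Fin n) ℂ) : gammaPlus A = sInf (gset A) := rfl

lemma l1n_nonneg (x : Fin n → ℂ) : 0 ≤ l1n x :=
  Finset.sum_nonneg fun _ _ => norm_nonneg _

lemma gset_nonneg {A : Matrix (Fin n) (Fin n) ℂ} {r : ℝ} (hr : r ∈ gset A) : 0 ≤ r := by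
  obtain ⟨m, g, -, rfl⟩ := hr
  exact Finset.sum_nonneg fun _ _ => sq_nonneg _

lemma gset_bddBelow (A : Matrix (Fin n) (Fin n) ℂ) : BddBelow (gset A) :=
  ⟨0, fun r hr => gset_nonneg hr⟩

lemma gammaPlus_nonneg (A : Matrix (Fin n) (Fin n) ℂ) : 0 ≤ gammaPlus A :=
  Real.sInf_nonneg fun _ hr => gset_nonneg hr

lemma frobNorm_nonneg (A : Matrix (Fin n) (Fin n) ℂ) : 0 ≤ frobNorm A := Real.sqrt_nonneg _

lemma frobNorm_neg (A : Matrix (Fin n) (Fin n) ℂ) : frobNorm (-A) = frobNorm A := by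
  unfold frobNorm; congr 1; simp

open scoped MatrixOrder in
/-- decomposition from the PSD square root, with ℓ¹ bound. -/
lemma exists_decomp {A : Matrix (Fin n) (Fin n) ℂ} (hA : A.PosSemidef) :
    ∃ g : Fin n → Fin n → ℂ,
      A = ∑ k, vecMulVec (g k) (star (g k)) ∧
      (∑ k, (l1n (g k)) ^ 2) ≤ (n : ℝ) * A.trace.re := by
  classical
  set B := CFC.sqrt A with hB
  have hBh : B.IsHermitian := (nonneg_iff_posSemidef.mp (CFC.sqrt_nonneg A)).isHermitian
  refine ⟨fun k i => B i k, ?_, ?_⟩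
  · have hmul : B * B = A := CFC.sqrt_mul_sqrt_self A (nonneg_iff_posSemidef.mpr hA)
    ext i j
    rw [← hmul]
    simp only [Matrix.sum_apply, vecMulVec_apply, Matrix.mul_apply, Pi.star_apply]
    refine Finset.sum_congr rfl fun k _ => ?_
    have : B k j = star (B j k) := by
      conv_lhs => rw [← hBh]
      simp [Matrix.conjTranspose_apply]
    rw [this]
  · have htr : A.trace.re = ∑ k, ∑ i, ‖B i k‖ ^ 2 := by
      have hmul : B * B = A := CFC.sqrt_mul_sqrt_self A (nonneg_iff_posSemidef.mpr hA)
      rw [← hmul]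
      rw [Matrix.trace]
      rw [Complex.re_sum]
      rw [Finset.sum_comm]
      refine Finset.sum_congr rfl fun k _ => ?_
      rw [Matrix.diag_apply, Matrix.mul_apply, Complex.re_sum]
      refine Finset.sum_congr rfl fun i _ => ?_
      have : B k i = star (B i k) := by
        conv_lhs => rw [← hBh]
        simp [Matrix.conjTranspose_apply]
      rw [this]
      simp only [show star (B i k) = (starRingEnd ℂ) (B i k) from rfl, Complex.norm_conj]
      rw [mul_comm, Complex.mul_conj, Complex.sq_norm]
      simp
    rw [htr, Finset.mul_sum]
    refine Finset.sum_le_sum fun k _ => ?_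
    have := sq_sum_le_card_mul_sum_sq (s := (Finset.univ : Finset (Fin n)))
      (f := fun i => ‖B i k‖)
    simpa [l1n] using this


lemma gset_nonempty {A : Matrix (Fin n) (Fin n) ℂ} (hA : A.PosSemidef) :
    (gset A).Nonempty := by
  obtain ⟨g, hg, -⟩ := exists_decomp hA
  exact ⟨_, n, g, hg, rfl⟩

lemma gammaPlus_le_trace {A : Matrix (Fin n) (Fin n) ℂ} (hA : A.PosSemidef) :
    gammaPlus A ≤ (n : ℝ) * A.trace.re := by
  obtain ⟨g, hg, hle⟩ := exists_decomp hA
  exact le_trans (csInf_le (gset_bddBelow A) ⟨n, g, hg, rfl⟩) hle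

lemma trace_re_nonneg {A : Matrix (Fin n) (Fin n) ℂ} (hA : A.PosSemidef) (hn : 1 ≤ n) :
    0 ≤ A.trace.re := by
  have h := le_trans (gammaPlus_nonneg A) (gammaPlus_le_trace hA)
  have hn' : (0:ℝ) < n := by exact_mod_cast hn
  nlinarith

lemma l1n_real_smul {r : ℝ} (hr : 0 ≤ r) (v : Fin n → ℂ) :
    l1n ((r : ℂ) • v) = r * l1n v := by
  unfold l1n
  rw [Finset.mul_sum]
  refine Finset.sum_congr rfl fun i _ => ?_
  simp [Complex.real_smul, norm_mul, Complex.norm_real, abs_of_nonneg hr]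

lemma vecMulVec_real_smul (r : ℝ) (v : Fin n → ℂ) :
    vecMulVec ((r : ℂ) • v) (star ((r : ℂ) • v)) = (r ^ 2 : ℝ) • vecMulVec v (star v) := by
  ext i j
  simp only [vecMulVec_apply, Pi.smul_apply, Pi.star_apply, Matrix.smul_apply, smul_eq_mul,
    star_smul, Complex.real_smul]
  push_cast
  simp only [RCLike.star_def, Complex.conj_ofReal]
  ring

lemma mem_combine {S Q : Matrix (Fin n) (Fin n) ℂ} {c : ℝ} (hc : 0 ≤ c)
    {x y : ℝ} (hx : x ∈ gset S) (hy : y ∈ gset Q) : c * x + y ∈ gset (c • S + Q) := by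
  obtain ⟨m1, g, hgS, rfl⟩ := hx
  obtain ⟨m2, h, hhQ, rfl⟩ := hy
  refine ⟨m1 + m2, Fin.append (fun k => ((Real.sqrt c : ℝ) : ℂ) • g k) h, ?_, ?_⟩
  · rw [Fin.sum_univ_add]
    simp only [Fin.append_left, Fin.append_right]
    have h1 : ∑ i : Fin m1, vecMulVec (((Real.sqrt c : ℝ) : ℂ) • g i)
        (star (((Real.sqrt c : ℝ) : ℂ) • g i)) = c • S := by
      rw [hgS, Finset.smul_sum]
      refine Finset.sum_congr rfl fun i _ => ?_
      rw [vecMulVec_real_smul, Real.sq_sqrt hc]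
    rw [h1, ← hhQ]
  · rw [Fin.sum_univ_add]
    simp only [Fin.append_left, Fin.append_right]
    congr 1
    rw [Finset.mul_sum]
    refine Finset.sum_congr rfl fun i _ => ?_
    rw [l1n_real_smul (Real.sqrt_nonneg c), mul_pow, Real.sq_sqrt hc]

lemma gammaPlus_combine {S Q : Matrix (Fin n) (Fin n) ℂ} (hS : S.PosSemidef)
    (hQ : Q.PosSemidef) {c : ℝ} (hc : 0 ≤ c) :
    gammaPlus (c • S + Q) ≤ c * gammaPlus S + gammaPlus Q := by
  refine le_of_forall_pos_le_add fun ε hε => ?_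
  obtain ⟨x, hx, hxlt⟩ := Real.lt_sInf_add_pos (gset_nonempty hS)
    (show 0 < ε / (2 * (c + 1)) by positivity)
  obtain ⟨y, hy, hylt⟩ := Real.lt_sInf_add_pos (gset_nonempty hQ)
    (show 0 < ε / 2 by positivity)
  have h1 : gammaPlus (c • S + Q) ≤ c * x + y :=
    csInf_le (gset_bddBelow _) (mem_combine hc hx hy)
  rw [gammaPlus_eq S, gammaPlus_eq Q] at *
  have h2 : c * x ≤ c * (sInf (gset S) + ε / (2 * (c + 1))) :=
    mul_le_mul_of_nonneg_left hxlt.le hc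
  have h3 : c * (ε / (2 * (c + 1))) ≤ ε / 2 := by
    rw [mul_div_assoc', div_le_div_iff₀ (by positivity) (by norm_num)]
    nlinarith
  nlinarith

lemma quadForm_eq_sum (A : Matrix (Fin n) (Fin n) ℂ) (x : Fin n → ℂ) :
    dotProduct (star x) (A *ᵥ x) = ∑ i, ∑ j, (starRingEnd ℂ) (x i) * A i j * x j := by
  simp only [dotProduct, mulVec, Pi.star_apply, RCLike.star_def]
  refine Finset.sum_congr rfl fun i _ => ?_
  rw [Finset.mul_sum]
  refine Finset.sum_congr rfl fun j _ => by ring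

lemma conj_quadForm {A : Matrix (Fin n) (Fin n) ℂ} (hA : A.IsHermitian) (x : Fin n → ℂ) :
    (starRingEnd ℂ) (dotProduct (star x) (A *ᵥ x)) = dotProduct (star x) (A *ᵥ x) := by
  rw [quadForm_eq_sum, map_sum]
  rw [Finset.sum_comm]
  refine Finset.sum_congr rfl fun j _ => ?_
  rw [map_sum]
  refine Finset.sum_congr rfl fun i _ => ?_
  simp only [_root_.map_mul, RingHomCompTriple.comp_apply, RingHom.id_apply, Complex.conj_conj]
  have h2 : (starRingEnd ℂ) (A j i) = A i j := by
    conv_rhs => rw [← hA]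
    simp [Matrix.conjTranspose_apply]
  rw [h2]
  ring

lemma im_quadForm {A : Matrix (Fin n) (Fin n) ℂ} (hA : A.IsHermitian) (x : Fin n → ℂ) :
    (dotProduct (star x) (A *ᵥ x)).im = 0 := by
  have := conj_quadForm hA x
  rw [Complex.conj_eq_iff_im] at this
  exact this

lemma abs_quadForm (A : Matrix (Fin n) (Fin n) ℂ) (x : Fin n → ℂ) :
    ‖dotProduct (star x) (A *ᵥ x)‖ ≤
      frobNorm A * ∑ i, ‖x i‖ ^ 2 := by
  rw [quadForm_eq_sum]
  set N := ∑ i, ‖x i‖ ^ 2 with hN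
  have hstep : ‖∑ i, ∑ j, (starRingEnd ℂ) (x i) * A i j * x j‖ ≤
      ∑ i, ∑ j, ‖x i‖ * ‖A i j‖ * ‖x j‖ := by
    refine le_trans (norm_sum_le _ _) (Finset.sum_le_sum fun i _ => ?_)
    refine le_trans (norm_sum_le _ _) (Finset.sum_le_sum fun j _ => ?_)
    simp [_root_.map_mul]
  refine hstep.trans ?_
  -- Cauchy-Schwarz over pairs
  have hCS := Finset.sum_mul_sq_le_sq_mul_sq (Finset.univ : Finset (Fin n × Fin n))
    (fun p => ‖x p.1‖ * ‖x p.2‖) (fun p => ‖A p.1 p.2‖)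
  have hL : ∑ i, ∑ j, ‖x i‖ * ‖A i j‖ * ‖x j‖ =
      ∑ p : Fin n × Fin n, (‖x p.1‖ * ‖x p.2‖) * ‖A p.1 p.2‖ := by
    rw [← Finset.sum_product']
    refine Finset.sum_congr rfl fun p _ => by ring
  have hf2 : ∑ p : Fin n × Fin n, (‖x p.1‖ * ‖x p.2‖) ^ 2 = N ^ 2 := by
    rw [← Finset.univ_product_univ, Finset.sum_product]
    rw [sq N, Finset.sum_mul_sum]
    refine Finset.sum_congr rfl fun i _ => Finset.sum_congr rfl fun j _ => by ring
  have hg2 : ∑ p : Fin n × Fin n, ‖A p.1 p.2‖ ^ 2 =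
      ∑ i, ∑ j, ‖A i j‖ ^ 2 := by
    rw [← Finset.univ_product_univ, Finset.sum_product]
  rw [hL]
  have hPnn : 0 ≤ ∑ p : Fin n × Fin n,
      (‖x p.1‖ * ‖x p.2‖) * ‖A p.1 p.2‖ :=
    Finset.sum_nonneg fun p _ => by positivity
  have hNnn : 0 ≤ N := Finset.sum_nonneg fun i _ => by positivity
  have h2 : (∑ p : Fin n × Fin n, (‖x p.1‖ * ‖x p.2‖) *
      ‖A p.1 p.2‖) ^ 2 ≤ N ^ 2 * ∑ i, ∑ j, ‖A i j‖ ^ 2 := by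
    rw [← hf2, ← hg2]; exact hCS
  calc (∑ p : Fin n × Fin n, (‖x p.1‖ * ‖x p.2‖) * ‖A p.1 p.2‖)
      = Real.sqrt ((∑ p : Fin n × Fin n, (‖x p.1‖ * ‖x p.2‖) * ‖A p.1 p.2‖) ^ 2) := (Real.sqrt_sq hPnn).symm
    _ ≤ Real.sqrt (N ^ 2 * ∑ i, ∑ j, ‖A i j‖ ^ 2) := Real.sqrt_le_sqrt h2
    _ = N * Real.sqrt (∑ i, ∑ j, ‖A i j‖ ^ 2) := by
        rw [Real.sqrt_mul (sq_nonneg N), Real.sqrt_sq hNnn]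
    _ = frobNorm A * N := by rw [frobNorm]; ring


lemma real_smul_one_eq_diagonal (r : ℝ) :
    (r • (1 : Matrix (Fin n) (Fin n) ℂ)) = diagonal (fun _ => (r : ℂ)) := by
  ext i j
  simp only [Matrix.smul_apply, Matrix.one_apply, Matrix.diagonal_apply, Complex.real_smul]
  split <;> simp

lemma isHermitian_real_smul_one (r : ℝ) :
    (r • (1 : Matrix (Fin n) (Fin n) ℂ)).IsHermitian := by
  rw [real_smul_one_eq_diagonal]
  exact isHermitian_diagonal_of_self_adjoint _ (funext fun i => Complex.conj_ofReal r)

lemma psd_real_smul {A : Matrix (Fin n) (Fin n) ℂ} (hA : A.PosSemidef) {c : ℝ} (hc : 0 ≤ c) :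
    (c • A).PosSemidef := by
  refine Matrix.PosSemidef.of_dotProduct_mulVec_nonneg ?_ ?_
  · ext i j
    simp only [Matrix.conjTranspose_apply, Matrix.smul_apply, Complex.real_smul]
    rw [star_mul']
    rw [show star ((c : ℝ) : ℂ) = ((c : ℝ) : ℂ) from Complex.conj_ofReal c]
    congr 1
    calc star (A j i) = Aᴴ i j := (Matrix.conjTranspose_apply A j i).symm
      _ = A i j := by rw [hA.1]
  · intro x
    have h : (c • A) *ᵥ x = c • (A *ᵥ x) := smul_mulVec c A x
    rw [h, dotProduct_smul]
    have := hA.dotProduct_mulVec_nonneg x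
    rw [show c • (dotProduct (star x) (A *ᵥ x)) = (c : ℂ) * dotProduct (star x) (A *ᵥ x)
      from Complex.real_smul]
    exact mul_nonneg (Complex.zero_le_real.mpr hc) this

lemma sum_abs_sq_eq (x : Fin n → ℂ) :
    dotProduct (star x) x = ((∑ i, ‖x i‖ ^ 2 : ℝ) : ℂ) := by
  rw [dotProduct, Complex.ofReal_sum]
  refine Finset.sum_congr rfl fun i _ => ?_
  simp only [Pi.star_apply, RCLike.star_def]
  rw [mul_comm, Complex.mul_conj, Complex.sq_norm]

lemma posSemidef_frob_smul_add {A : Matrix (Fin n) (Fin n) ℂ} (hA : A.IsHermitian) :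
    (frobNorm A • (1 : Matrix (Fin n) (Fin n) ℂ) + A).PosSemidef := by
  refine Matrix.PosSemidef.of_dotProduct_mulVec_nonneg ?_ ?_
  · exact (isHermitian_real_smul_one _).add hA
  · intro x
    rw [add_mulVec, dotProduct_add]
    have h1 : (frobNorm A • (1 : Matrix (Fin n) (Fin n) ℂ)) *ᵥ x = frobNorm A • x := by
      rw [smul_mulVec, one_mulVec]
    rw [h1, dotProduct_smul]
    set q := dotProduct (star x) (A *ᵥ x) with hq
    set N := ∑ i, ‖x i‖ ^ 2 with hNdef
    have hN : dotProduct (star x) x = (N : ℂ) := sum_abs_sq_eq x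
    rw [hN]
    have hsm : frobNorm A • ((N : ℝ) : ℂ) = ((frobNorm A * N : ℝ) : ℂ) := by
      rw [Complex.real_smul]; push_cast; ring
    rw [hsm]
    rw [Complex.le_def]
    constructor
    · simp only [Complex.add_re, Complex.ofReal_re, Complex.zero_re]
      have h2 : |q.re| ≤ ‖q‖ := Complex.abs_re_le_norm q
      have h3 := abs_quadForm A x
      rw [← hq, ← hNdef] at h3
      have := abs_le.mp h2
      linarith [this.1]
    · simp only [Complex.add_im, Complex.ofReal_im, Complex.zero_im, im_quadForm hA x, ← hq]
      rw [im_quadForm hA x]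
      ring

lemma posSemidef_sub_smul_one (hn : 1 ≤ n) {A : Matrix (Fin n) (Fin n) ℂ}
    (hA : A.IsHermitian) :
    (A - (⨅ i, hA.eigenvalues i) • (1 : Matrix (Fin n) (Fin n) ℂ)).PosSemidef := by
  have : Nonempty (Fin n) := ⟨⟨0, hn⟩⟩
  set μ := ⨅ i, hA.eigenvalues i with hμ
  have hμle : ∀ i, μ ≤ hA.eigenvalues i := fun i =>
    ciInf_le (Set.Finite.bddBelow (Set.finite_range _)) i
  set U : Matrix (Fin n) (Fin n) ℂ := (hA.eigenvectorUnitary : Matrix (Fin n) (Fin n) ℂ)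
    with hU
  have hUU : U * star U = 1 := mem_unitaryGroup_iff.mp hA.eigenvectorUnitary.2
  have hspec := hA.spectral_theorem
  have key : A - μ • (1 : Matrix (Fin n) (Fin n) ℂ) =
      U * diagonal (fun i => ((hA.eigenvalues i - μ : ℝ) : ℂ)) * Uᴴ := by
    have hd : diagonal (fun i => ((hA.eigenvalues i - μ : ℝ) : ℂ)) =
        diagonal ((RCLike.ofReal ∘ hA.eigenvalues : Fin n → ℂ)) -
          μ • (1 : Matrix (Fin n) (Fin n) ℂ) := by
      rw [real_smul_one_eq_diagonal, Matrix.diagonal_sub]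
      congr 1
      funext i
      push_cast
      rfl
    have h2 : U * (μ • (1 : Matrix (Fin n) (Fin n) ℂ)) * Uᴴ =
        μ • (1 : Matrix (Fin n) (Fin n) ℂ) := by
      rw [Matrix.mul_smul, Matrix.mul_one, Matrix.smul_mul, ← Matrix.star_eq_conjTranspose, hUU]
    rw [hd, Matrix.mul_sub, Matrix.sub_mul, h2]
    rw [← Matrix.star_eq_conjTranspose, hU]
    conv_lhs => rw [hspec]
    rfl
  rw [key]
  refine Matrix.PosSemidef.mul_mul_conjTranspose_same ?_ U
  refine Matrix.PosSemidef.diagonal fun i => ?_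
  exact Complex.zero_le_real.mpr (sub_nonneg.mpr (hμle i))

lemma trace_re_le (A : Matrix (Fin n) (Fin n) ℂ) :
    A.trace.re ≤ Real.sqrt n * frobNorm A := by
  have h1 : A.trace.re ≤ ∑ i, ‖A i i‖ := by
    rw [Matrix.trace, Complex.re_sum]
    exact Finset.sum_le_sum fun i _ => Complex.re_le_norm _
  refine h1.trans ?_
  have h2 : (∑ i, ‖A i i‖) ^ 2 ≤ (n : ℝ) * ∑ i, ‖A i i‖ ^ 2 := by
    simpa using sq_sum_le_card_mul_sum_sq (s := (Finset.univ : Finset (Fin n)))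
      (f := fun i => ‖A i i‖)
  have h3 : ∑ i, ‖A i i‖ ^ 2 ≤ ∑ i, ∑ j, ‖A i j‖ ^ 2 :=
    Finset.sum_le_sum fun i _ =>
      Finset.single_le_sum (f := fun j => ‖A i j‖ ^ 2)
        (fun j _ => sq_nonneg _) (Finset.mem_univ i)
  have hs : 0 ≤ ∑ i, ‖A i i‖ := Finset.sum_nonneg fun i _ => norm_nonneg _
  calc ∑ i, ‖A i i‖ = Real.sqrt ((∑ i, ‖A i i‖) ^ 2) :=
        (Real.sqrt_sq hs).symm
    _ ≤ Real.sqrt ((n : ℝ) * ∑ i, ∑ j, ‖A i j‖ ^ 2) := by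
        refine Real.sqrt_le_sqrt ?_
        refine h2.trans ?_
        have : (0:ℝ) ≤ n := Nat.cast_nonneg n
        nlinarith
    _ = Real.sqrt n * frobNorm A := by
        rw [Real.sqrt_mul (Nat.cast_nonneg n), frobNorm]

lemma key (hn : 1 ≤ n) (T : Matrix (Fin n) (Fin n) ℂ) (hT : T.PosDef) (δ : ℝ)
    (hδ : δ = (⨅ i, hT.1.eigenvalues i) / 2) :
    0 < δ ∧
    ∀ S : Matrix (Fin n) (Fin n) ℂ, S.PosDef → frobNorm (T - S) ≤ δ →
      |gammaPlus T - gammaPlus S| ≤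
        ((n : ℝ) / δ * T.trace.re + 2 * (n : ℝ) ^ ((3 : ℝ) / 2)) * frobNorm (T - S) := by
  have hne : Nonempty (Fin n) := ⟨⟨0, hn⟩⟩
  have hδpos : 0 < δ := by
    obtain ⟨i0, hi0⟩ := Finite.exists_min hT.1.eigenvalues
    have h1 : 0 < hT.1.eigenvalues i0 := hT.eigenvalues_pos i0
    have h2 : hT.1.eigenvalues i0 ≤ ⨅ i, hT.1.eigenvalues i := le_ciInf hi0
    rw [hδ]; linarith
  refine ⟨hδpos, fun S hS hfr => ?_⟩
  have hε0 : 0 ≤ frobNorm (T - S) := frobNorm_nonneg _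
  set ε := frobNorm (T - S) with hε
  set c := ε / δ with hc
  have hc0 : 0 ≤ c := div_nonneg hε0 hδpos.le
  have hc1 : c ≤ 1 := (div_le_one hδpos).mpr hfr
  have hcδ : c * δ = ε := div_mul_cancel₀ ε hδpos.ne'
  have hEh : (T - S).IsHermitian := hT.1.sub hS.1
  have hE'h : (S - T).IsHermitian := hS.1.sub hT.1
  have hμ : (⨅ i, hT.1.eigenvalues i) = 2 * δ := by rw [hδ]; ring
  have P1 : (T - (2 * δ) • (1 : Matrix (Fin n) (Fin n) ℂ)).PosSemidef := by
    have := posSemidef_sub_smul_one hn hT.1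
    rwa [hμ] at this
  have hfrE' : frobNorm (S - T) = ε := by
    rw [show S - T = -(T - S) from (neg_sub T S).symm, frobNorm_neg]
  have P2 : (ε • (1 : Matrix (Fin n) (Fin n) ℂ) + (S - T)).PosSemidef := by
    have := posSemidef_frob_smul_add hE'h
    rwa [hfrE'] at this
  have P3 : (ε • (1 : Matrix (Fin n) (Fin n) ℂ) + (T - S)).PosSemidef :=
    posSemidef_frob_smul_add hEh
  have hone : (1 : Matrix (Fin n) (Fin n) ℂ).PosSemidef := Matrix.PosSemidef.one
  have h1 : c • (T - (2 * δ) • (1 : Matrix (Fin n) (Fin n) ℂ)) =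
      c • T - (2 * ε) • (1 : Matrix (Fin n) (Fin n) ℂ) := by
    rw [smul_sub, smul_smul]
    congr 2
    rw [← hcδ]; ring
  have htrT : (0:ℝ) ≤ T.trace.re := trace_re_nonneg hT.posSemidef hn
  have hsqn : (0:ℝ) ≤ Real.sqrt n := Real.sqrt_nonneg n
  have htrE : (T - S).trace.re ≤ Real.sqrt n * ε := trace_re_le (T - S)
  have htrE' : (S - T).trace.re ≤ Real.sqrt n * ε := by
    have := trace_re_le (S - T); rwa [hfrE'] at this
  -- Direction A : gammaPlus T ≤ gammaPlus S + bound
  have dirA : gammaPlus T - gammaPlus S ≤ (n : ℝ) * (c * T.trace.re + Real.sqrt n * ε) := by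
    set Q := c • (T - (2 * δ) • (1 : Matrix (Fin n) (Fin n) ℂ)) +
      ((1 - c) • (ε • (1 : Matrix (Fin n) (Fin n) ℂ) + (T - S)) +
        ((1 + c) * ε) • (1 : Matrix (Fin n) (Fin n) ℂ)) with hQ
    have hQpsd : Q.PosSemidef :=
      (psd_real_smul P1 hc0).add ((psd_real_smul P3 (by linarith)).add
        (psd_real_smul hone (by nlinarith)))
    have hTeq : T = (1 - c) • S + Q := by
      rw [hQ, h1]; module
    have hQalt : Q = c • T + (1 - c) • (T - S) := by
      rw [hQ, h1]; module
    have hA1 : gammaPlus T ≤ (1 - c) * gammaPlus S + gammaPlus Q := by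
      conv_lhs => rw [hTeq]
      exact gammaPlus_combine hS.posSemidef hQpsd (by linarith)
    have htrQ : Q.trace.re = c * T.trace.re + (1 - c) * (T - S).trace.re := by
      rw [hQalt, Matrix.trace_add, Matrix.trace_smul, Matrix.trace_smul]
      simp [Complex.add_re, Complex.smul_re]
    have hγQ : gammaPlus Q ≤ (n : ℝ) * Q.trace.re := gammaPlus_le_trace hQpsd
    have hγS := gammaPlus_nonneg S
    have hbd : Q.trace.re ≤ c * T.trace.re + Real.sqrt n * ε := by
      rw [htrQ]
      nlinarith [mul_le_mul_of_nonneg_left htrE (show (0:ℝ) ≤ 1 - c by linarith),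
        mul_nonneg hc0 (mul_nonneg hsqn hε0)]
    have hn0 : (0:ℝ) ≤ n := Nat.cast_nonneg n
    nlinarith [mul_le_mul_of_nonneg_left hbd hn0]
  -- Direction B : gammaPlus S ≤ gammaPlus T + bound
  have dirB : gammaPlus S - gammaPlus T ≤ (n : ℝ) * (c * T.trace.re + Real.sqrt n * ε) := by
    set Q := c • (T - (2 * δ) • (1 : Matrix (Fin n) (Fin n) ℂ)) +
      ((ε • (1 : Matrix (Fin n) (Fin n) ℂ) + (S - T)) +
        ε • (1 : Matrix (Fin n) (Fin n) ℂ)) with hQ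
    have hQpsd : Q.PosSemidef :=
      (psd_real_smul P1 hc0).add (P2.add (psd_real_smul hone hε0))
    have hSeq : S = (1 - c) • T + Q := by
      rw [hQ, h1]; module
    have hQalt : Q = c • T + (S - T) := by
      rw [hQ, h1]; module
    have hB1 : gammaPlus S ≤ (1 - c) * gammaPlus T + gammaPlus Q := by
      conv_lhs => rw [hSeq]
      exact gammaPlus_combine hT.posSemidef hQpsd (by linarith)
    have htrQ : Q.trace.re = c * T.trace.re + (S - T).trace.re := by
      rw [hQalt, Matrix.trace_add, Matrix.trace_smul]
      simp [Complex.add_re, Complex.smul_re]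
    have hγQ : gammaPlus Q ≤ (n : ℝ) * Q.trace.re := gammaPlus_le_trace hQpsd
    have hγT := gammaPlus_nonneg T
    have hbd : Q.trace.re ≤ c * T.trace.re + Real.sqrt n * ε := by
      rw [htrQ]; linarith
    have hn0 : (0:ℝ) ≤ n := Nat.cast_nonneg n
    nlinarith [mul_le_mul_of_nonneg_left hbd hn0]
  have h32 : (n : ℝ) ^ ((3 : ℝ) / 2) = (n : ℝ) * Real.sqrt n := by
    have hn0 : (0:ℝ) < n := by exact_mod_cast hn
    rw [show (3:ℝ)/2 = 1 + 1/2 by norm_num, Real.rpow_add hn0, Real.rpow_one,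
      ← Real.sqrt_eq_rpow]
  have hfin : (n : ℝ) * (c * T.trace.re + Real.sqrt n * ε) ≤
      ((n : ℝ) / δ * T.trace.re + 2 * (n : ℝ) ^ ((3 : ℝ) / 2)) * ε := by
    have hceq : (n : ℝ) * (c * T.trace.re) = (n : ℝ) / δ * T.trace.re * ε := by
      rw [hc]; field_simp
    have hn0 : (0:ℝ) ≤ n := Nat.cast_nonneg n
    have h2 : (n : ℝ) * (Real.sqrt n * ε) ≤ 2 * (n : ℝ) ^ ((3 : ℝ) / 2) * ε := by
      rw [h32]
      nlinarith [mul_nonneg (mul_nonneg (Nat.cast_nonneg (α := ℝ) n) hsqn) hε0]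
    linarith
  rw [abs_sub_le_iff]
  exact ⟨dirA.trans hfin, dirB.trans hfin⟩

lemma continuousOn (hn : 1 ≤ n) :
    ContinuousOn gammaPlus {A : Matrix (Fin n) (Fin n) ℂ | A.PosDef} := by
  intro T hT
  have hTpd : T.PosDef := hT
  obtain ⟨hδpos, hbound⟩ := key hn T hTpd ((⨅ i, hTpd.1.eigenvalues i) / 2) rfl
  set δ := (⨅ i, hTpd.1.eigenvalues i) / 2 with hδ
  set C := (n : ℝ) / δ * T.trace.re + 2 * (n : ℝ) ^ ((3 : ℝ) / 2) with hC
  have htr : 0 ≤ T.trace.re := trace_re_nonneg hTpd.posSemidef hn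
  have hC0 : 0 ≤ C := by
    have h1 : (0:ℝ) ≤ (n : ℝ) ^ ((3 : ℝ) / 2) := Real.rpow_nonneg (Nat.cast_nonneg n) _
    have h2 : (0:ℝ) ≤ (n : ℝ) / δ := div_nonneg (Nat.cast_nonneg n) hδpos.le
    rw [hC]
    nlinarith [mul_nonneg h2 htr]
  have hent : ∀ i j : Fin n, Continuous fun S : Matrix (Fin n) (Fin n) ℂ => S i j :=
    fun i j => (continuous_apply j).comp (continuous_apply i)
  have hF : Continuous fun S : Matrix (Fin n) (Fin n) ℂ => frobNorm (T - S) := by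
    apply Real.continuous_sqrt.comp
    refine continuous_finset_sum _ fun i _ => continuous_finset_sum _ fun j _ => ?_
    have : Continuous fun S : Matrix (Fin n) (Fin n) ℂ => (T - S) i j := by
      simp only [Matrix.sub_apply]
      exact continuous_const.sub (hent i j)
    exact (continuous_norm.comp this).pow 2
  rw [ContinuousWithinAt]
  rw [Metric.tendsto_nhds]
  intro ε hε
  set η := min δ (ε / (C + 1)) with hη
  have hηpos : 0 < η := lt_min hδpos (by positivity)
  have hFT : frobNorm (T - T) = 0 := by simp [frobNorm]
  have hev1 : ∀ᶠ S in nhds T, frobNorm (T - S) < η := by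
    have hcont := hF.continuousAt (x := T)
    have : Set.Iio η ∈ nhds (frobNorm (T - T)) := Iio_mem_nhds (by rw [hFT]; exact hηpos)
    exact hcont.preimage_mem_nhds this
  have hev2 : ∀ᶠ S in nhdsWithin T {A : Matrix (Fin n) (Fin n) ℂ | A.PosDef},
      frobNorm (T - S) < η := nhdsWithin_le_nhds hev1
  have hev3 : ∀ᶠ S in nhdsWithin T {A : Matrix (Fin n) (Fin n) ℂ | A.PosDef},
      S ∈ {A : Matrix (Fin n) (Fin n) ℂ | A.PosDef} := eventually_mem_nhdsWithin
  filter_upwards [hev2, hev3] with S hS1 hS2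
  have hb := hbound S hS2 (le_of_lt (lt_of_lt_of_le hS1 (min_le_left _ _)))
  rw [Real.dist_eq]
  have h1 : |gammaPlus S - gammaPlus T| = |gammaPlus T - gammaPlus S| := abs_sub_comm _ _
  rw [h1]
  have h2 : C * frobNorm (T - S) ≤ C * η := mul_le_mul_of_nonneg_left hS1.le hC0
  have h3 : C * η ≤ C * (ε / (C + 1)) :=
    mul_le_mul_of_nonneg_left (min_le_right _ _) hC0
  have h4 : C * (ε / (C + 1)) < ε := by
    rw [← mul_div_assoc, div_lt_iff₀ (by linarith)]
    nlinarith
  calc |gammaPlus T - gammaPlus S| ≤ C * frobNorm (T - S) := hb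
    _ ≤ C * η := h2
    _ < ε := lt_of_le_of_lt h3 (lt_of_le_of_lt (le_refl _) h4)

end Aux

theorem stmt15 (n : ℕ) (hn : 1 ≤ n) :
    (∀ (T : Matrix (Fin n) (Fin n) ℂ) (hT : T.PosDef) (δ : ℝ),
      δ = (⨅ i, hT.1.eigenvalues i) / 2 →
      0 < δ ∧
      ∀ S : Matrix (Fin n) (Fin n) ℂ, S.PosDef → frobNorm (T - S) ≤ δ →
        |gammaPlus T - gammaPlus S| ≤
          ((n : ℝ) / δ * T.trace.re + 2 * (n : ℝ) ^ ((3 : ℝ) / 2)) * frobNorm (T - S)) ∧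
    ContinuousOn gammaPlus {A : Matrix (Fin n) (Fin n) ℂ | A.PosDef} := by
  constructor
  · exact fun T hT δ hδ => Aux.key hn T hT δ hδ
  · exact Aux.continuousOn hn
end

section
/- Let n ≥ 1 and suppose the n×n complex positive semidefinite Hermitian matrix A admits a decomposition A = Σ_{1 ≤ i < j ≤ n} u_{ij} u_{ij}* + Σ_{i=1}^n v_i v_i*, where each vector u_{ij} ∈ ℂⁿ has nonzero entries at most in positions i and j, and each vector v_i ∈ ℂⁿ has nonzero entries at most in position i. Then γ₊(A) = ‖A‖₁,₁. -/
open Matrix ComplexOrder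

lemma norm11_vecMulVec {n : ℕ} (g : Fin n → ℂ) :
    norm11 (vecMulVec g (star g)) = (l1n g)^2 := by
  simp only [norm11, vecMulVec_apply, Pi.star_apply, l1n, sq, Finset.sum_mul_sum]
  simp [Complex.norm_conj]

lemma norm11_sum_le {n m : ℕ} (M : Fin m → Matrix (Fin n) (Fin n) ℂ) :
    norm11 (∑ k, M k) ≤ ∑ k, norm11 (M k) := by
  simp only [norm11, Matrix.sum_apply]
  rw [Finset.sum_comm (f := fun k i => ∑ j, ‖M k i j‖)]
  refine Finset.sum_le_sum fun i _ => ?_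
  rw [Finset.sum_comm]
  refine Finset.sum_le_sum fun j _ => ?_
  exact norm_sum_le _ _

lemma tri_split {n : ℕ} (d : Fin n → ℝ) (w w' : Fin n → Fin n → ℝ) :
    ∑ p : Fin n, ∑ q : Fin n, (if p = q then d p else if p < q then w p q else w' p q)
    = ∑ p, d p + ∑ p : Fin n, ∑ q : Fin n, (if p < q then w p q else 0)
      + ∑ p : Fin n, ∑ q : Fin n, (if p < q then w' q p else 0) := by
  have h : ∀ p q : Fin n, (if p = q then d p else if p < q then w p q else w' p q)
      = (if p = q then d p else 0) + (if p < q then w p q else 0)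
        + (if q < p then w' p q else 0) := by
    intro p q
    rcases lt_trichotomy p q with h|h|h
    · simp [h, h.ne, asymm h]
    · simp [h, lt_irrefl]
    · simp [h, h.ne', asymm h, not_lt.mpr h.le]
  simp_rw [h, Finset.sum_add_distrib, Finset.sum_ite_eq, Finset.mem_univ, if_true]
  congr 1
  rw [Finset.sum_comm]

lemma sum_combine {n : ℕ} {M : Type*} [AddCommMonoid M]
    (u : Fin n → Fin n → Fin n → ℂ) (v : Fin n → Fin n → ℂ)
    (φ : (Fin n → ℂ) → M) (hφ : φ 0 = 0) :
    ∑ k : Fin (Fintype.card ((Fin n × Fin n) ⊕ Fin n)),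
      φ (Sum.elim (fun p : Fin n × Fin n => if p.1 < p.2 then u p.1 p.2 else 0) v
        ((Fintype.equivFin ((Fin n × Fin n) ⊕ Fin n)).symm k))
    = (∑ i, ∑ j ∈ Finset.univ.filter (fun j => i < j), φ (u i j)) + ∑ i, φ (v i) := by
  rw [Equiv.sum_comp ((Fintype.equivFin ((Fin n × Fin n) ⊕ Fin n)).symm)
    (fun x => φ (Sum.elim (fun p : Fin n × Fin n => if p.1 < p.2 then u p.1 p.2 else 0) v x)),
    Fintype.sum_sum_type, Fintype.sum_prod_type]
  simp only [Sum.elim_inl, Sum.elim_inr, apply_ite φ, hφ]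
  congr 1
  exact Finset.sum_congr rfl fun i _ => (Finset.sum_filter _ _).symm

theorem stmt17 (n : ℕ) (hn : 1 ≤ n) (A : Matrix (Fin n) (Fin n) ℂ) (hA : A.PosSemidef)
    (u : Fin n → Fin n → Fin n → ℂ) (v : Fin n → Fin n → ℂ)
    (hu : ∀ i j k, i < j → k ≠ i → k ≠ j → u i j k = 0)
    (hv : ∀ i k, k ≠ i → v i k = 0)
    (hdecomp : A =
      (∑ i, ∑ j ∈ Finset.univ.filter (fun j => i < j),
        vecMulVec (u i j) (star (u i j))) +
      ∑ i, vecMulVec (v i) (star (v i))) :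
    gammaPlus A = norm11 A := by
  classical
  -- support sums
  have hsupp : ∀ (i j : Fin n), i < j → ∀ (f : ℂ → ℝ), f 0 = 0 →
      ∑ k, f (u i j k) = f (u i j i) + f (u i j j) := by
    intro i j hij f hf
    rw [← Finset.sum_subset (Finset.subset_univ ({i, j} : Finset (Fin n)))
      (fun k _ hk => by
        simp only [Finset.mem_insert, Finset.mem_singleton, not_or] at hk
        rw [hu i j k hij hk.1 hk.2, hf])]
    rw [Finset.sum_pair hij.ne]
  have hl1u : ∀ i j : Fin n, i < j →
      l1n (u i j) = ‖u i j i‖ + ‖u i j j‖ :=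
    fun i j hij => hsupp i j hij (fun z => ‖z‖) norm_zero
  have hl1v : ∀ i : Fin n, l1n (v i) = ‖v i i‖ := fun i =>
    Finset.sum_eq_single i (fun k _ hk => by rw [hv i k hk]; simp) (by simp)
  -- entrywise formula
  have hApq : ∀ p q, A p q =
      (∑ i, ∑ j ∈ Finset.univ.filter (fun j => i < j),
        u i j p * (starRingEnd ℂ) (u i j q)) +
      ∑ i, v i p * (starRingEnd ℂ) (v i q) := by
    intro p q
    rw [hdecomp]
    simp [Matrix.sum_apply, vecMulVec_apply, Matrix.add_apply, Complex.star_def]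
  -- off diagonal entries
  have hoffd : ∀ p q : Fin n, p < q →
      A p q = u p q p * (starRingEnd ℂ) (u p q q) := by
    intro p q hpq
    rw [hApq p q]
    have h2 : ∑ i, v i p * (starRingEnd ℂ) (v i q) = 0 := by
      refine Finset.sum_eq_zero fun i _ => ?_
      rcases ne_or_eq p i with h|h
      · rw [hv i p h, zero_mul]
      · rw [hv i q (h ▸ hpq.ne'), map_zero, mul_zero]
    have h1 : ∑ i, ∑ j ∈ Finset.univ.filter (fun j => i < j),
        u i j p * (starRingEnd ℂ) (u i j q)
        = u p q p * (starRingEnd ℂ) (u p q q) := by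
      rw [Finset.sum_eq_single p ?_ (fun h => absurd (Finset.mem_univ p) h)]
      · rw [Finset.sum_eq_single q ?_ ?_]
        · intro j hj hjq
          have hpj : p < j := (Finset.mem_filter.mp hj).2
          rw [hu p j q hpj hpq.ne' (Ne.symm hjq), map_zero, mul_zero]
        · intro hq
          exact absurd (Finset.mem_filter.mpr ⟨Finset.mem_univ q, hpq⟩) hq
      · intro i _ hip
        refine Finset.sum_eq_zero fun j hj => ?_
        have hij : i < j := (Finset.mem_filter.mp hj).2
        rcases ne_or_eq p j with h|h
        · rw [hu i j p hij (Ne.symm hip) h, zero_mul]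
        · have hq_j : q ≠ j := by rw [← h]; exact hpq.ne'
          have hq_i : q ≠ i := by
            have : i < q := lt_trans (h ▸ hij) hpq
            exact this.ne'
          rw [hu i j q hij hq_i hq_j, map_zero, mul_zero]
    rw [h1, h2, add_zero]
  -- diagonal entries
  have hdiag : ∀ p, A p p =
      (((∑ i, ∑ j ∈ Finset.univ.filter (fun j => i < j), ‖u i j p‖ ^ 2)
        + ‖v p p‖ ^ 2 : ℝ) : ℂ) := by
    intro p
    rw [hApq p p]
    have hz : ∀ z : ℂ, z * (starRingEnd ℂ) z = ((‖z‖ ^ 2 : ℝ) : ℂ) := by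
      intro z; rw [Complex.mul_conj, Complex.sq_norm]
    have h2 : ∑ i, v i p * (starRingEnd ℂ) (v i p)
        = ((‖v p p‖ ^ 2 : ℝ) : ℂ) := by
      rw [Finset.sum_eq_single p (fun i _ hip => by rw [hv i p (Ne.symm hip), zero_mul])
        (fun h => absurd (Finset.mem_univ p) h), hz]
    rw [h2]
    simp_rw [hz]
    push_cast
    ring
  -- abs of entries
  have habs : ∀ p q : Fin n, ‖A p q‖ =
      if p = q then (∑ i, ∑ j ∈ Finset.univ.filter (fun j => i < j),
          ‖u i j p‖ ^ 2) + ‖v p p‖ ^ 2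
      else if p < q then ‖u p q p‖ * ‖u p q q‖
      else ‖u q p q‖ * ‖u q p p‖ := by
    intro p q
    rcases lt_trichotomy p q with h|h|h
    · rw [if_neg h.ne, if_pos h, hoffd p q h, norm_mul, Complex.norm_conj]
    · subst h
      rw [if_pos rfl, hdiag p, Complex.norm_real, Real.norm_eq_abs, abs_of_nonneg]
      positivity
    · rw [if_neg h.ne', if_neg (asymm h)]
      rw [← hA.isHermitian.apply p q, Complex.star_def, Complex.norm_conj,
        hoffd q p h, norm_mul, Complex.norm_conj]
  -- compute norm11 A
  have key : norm11 A =
      (∑ i, ∑ j ∈ Finset.univ.filter (fun j => i < j), (l1n (u i j)) ^ 2)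
        + ∑ i, (l1n (v i)) ^ 2 := by
    have e1 : norm11 A = ∑ p : Fin n, ∑ q : Fin n,
        (if p = q then (∑ i, ∑ j ∈ Finset.univ.filter (fun j => i < j),
            ‖u i j p‖ ^ 2) + ‖v p p‖ ^ 2
        else if p < q then ‖u p q p‖ * ‖u p q q‖
        else ‖u q p q‖ * ‖u q p p‖) := by
      unfold norm11
      exact Finset.sum_congr rfl fun p _ => Finset.sum_congr rfl fun q _ => habs p q
    rw [e1, tri_split]
    have e2 : ∑ p : Fin n, ((∑ i, ∑ j ∈ Finset.univ.filter (fun j => i < j),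
          ‖u i j p‖ ^ 2) + ‖v p p‖ ^ 2)
        = (∑ i : Fin n, ∑ j : Fin n, if i < j then
            ‖u i j i‖ ^ 2 + ‖u i j j‖ ^ 2 else 0)
          + ∑ p, ‖v p p‖ ^ 2 := by
      rw [Finset.sum_add_distrib]
      congr 1
      rw [Finset.sum_comm]
      refine Finset.sum_congr rfl fun i _ => ?_
      rw [← Finset.sum_filter, Finset.sum_comm]
      refine Finset.sum_congr rfl fun j hj => ?_
      have hij : i < j := (Finset.mem_filter.mp hj).2
      exact hsupp i j hij (fun z => ‖z‖ ^ 2) (by simp)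
    rw [e2]
    simp_rw [Finset.sum_filter, hl1v]
    have rearrange : ∀ x c y z w : ℝ, x + y + z = w → x + c + y + z = w + c := by
      intros; linarith
    refine rearrange _ _ _ _ _ ?_
    rw [← Finset.sum_add_distrib, ← Finset.sum_add_distrib]
    refine Finset.sum_congr rfl fun i _ => ?_
    rw [← Finset.sum_add_distrib, ← Finset.sum_add_distrib]
    refine Finset.sum_congr rfl fun j _ => ?_
    by_cases h : i < j
    · simp only [if_pos h, hl1u i j h]; ring
    · simp only [if_neg h]; ring
  -- lower bound
  have hlb : ∀ r ∈ {r : ℝ | ∃ (m : ℕ) (g : Fin m → Fin n → ℂ),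
      A = ∑ k, vecMulVec (g k) (star (g k)) ∧ r = ∑ k, (l1n (g k)) ^ 2},
      norm11 A ≤ r := by
    rintro r ⟨m, g, hg, rfl⟩
    calc norm11 A = norm11 (∑ k, vecMulVec (g k) (star (g k))) := by rw [← hg]
      _ ≤ ∑ k, norm11 (vecMulVec (g k) (star (g k))) := norm11_sum_le _
      _ = ∑ k, (l1n (g k)) ^ 2 := by simp_rw [norm11_vecMulVec]
  -- membership
  have hmem : norm11 A ∈ {r : ℝ | ∃ (m : ℕ) (g : Fin m → Fin n → ℂ),
      A = ∑ k, vecMulVec (g k) (star (g k)) ∧ r = ∑ k, (l1n (g k)) ^ 2} := by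
    refine ⟨Fintype.card ((Fin n × Fin n) ⊕ Fin n),
      fun k => Sum.elim (fun p : Fin n × Fin n => if p.1 < p.2 then u p.1 p.2 else 0) v
        ((Fintype.equivFin ((Fin n × Fin n) ⊕ Fin n)).symm k), ?_, ?_⟩
    · rw [sum_combine u v (fun g => vecMulVec g (star g))
        (by ext i j; simp [vecMulVec_apply])]
      exact hdecomp
    · rw [sum_combine u v (fun g => (l1n g) ^ 2) (by simp [l1n])]
      exact key
  unfold gammaPlus
  refine le_antisymm ?_ ?_
  · exact csInf_le ⟨norm11 A, fun r hr => hlb r hr⟩ hmem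
  · exact le_csInf ⟨norm11 A, hmem⟩ hlb
end
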